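/- arXiv:2603.25320 — 7 statements merged into one kernel-verified Lean document; each statement's English description precedes it below -/
import Mathlib

section
/- Let h : [0,∞) → ℝ be differentiable with derivative h', and suppose h' is absolutely continuous in the sense that there is a locally integrable function g : [0,∞) → ℝ with h'(y) = h'(α) + ∫_α^y g(K) dK for all y ≥ 0, where α ≥ 0 is a fixed anchor. Then for every x ≥ 0 one has the Carr–Madan spanning identity h(x) = h(α) + h'(α)(x − α) + ∫_0^α g(K)·(K − x)⁺ dK + ∫_α^∞ g(K)·(x − K)⁺ dK, where both integrals converge absolutely (the integrand of the second integral vanishes for K > max(x, α)). -/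
open MeasureTheory Set


lemma tri1 (g : ℝ → ℝ) {a b : ℝ} (hab : a ≤ b) (hg : IntegrableOn g (Ioc a b)) :
    (∫ y in Ioc a b, (∫ K in Ioc a y, g K)) = ∫ K in Ioc a b, (b - K) * g K := by
  set μ := volume.restrict (Ioc a b) with hμ
  have hfin : IsFiniteMeasure μ := by
    constructor; rw [hμ, Measure.restrict_apply_univ]; exact measure_Ioc_lt_top
  set F : ℝ → ℝ → ℝ := fun y K => if K ≤ y then g K else 0 with hF
  have hs : MeasurableSet {p : ℝ × ℝ | p.2 ≤ p.1} :=
    measurableSet_le measurable_snd measurable_fst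
  have hgm : Integrable (fun p : ℝ × ℝ => g p.2) (μ.prod μ) := by
    simpa using (integrable_const (1:ℝ)).mul_prod (hg : Integrable g μ)
  have hFi : Integrable (Function.uncurry F) (μ.prod μ) := by
    have : Function.uncurry F = {p : ℝ × ℝ | p.2 ≤ p.1}.indicator (fun p => g p.2) := by
      ext p; by_cases hp : p.2 ≤ p.1 <;>
        simp [Function.uncurry, hF, hp, indicator_apply, mem_setOf_eq]
    rw [this]
    exact hgm.indicator hs
  have swap := integral_integral_swap hFi
  have hL : (∫ y, ∫ K, F y K ∂μ ∂μ) = ∫ y in Ioc a b, (∫ K in Ioc a y, g K) := by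
    refine setIntegral_congr_fun measurableSet_Ioc (fun y hy => ?_)
    have : (fun K => F y K) = (Iic y).indicator g := by
      ext K; by_cases hK : K ≤ y <;> simp [hF, hK, indicator_apply]
    rw [this, hμ, setIntegral_indicator measurableSet_Iic, Ioc_inter_Iic,
      min_eq_right hy.2]
  have hR : (∫ K, ∫ y, F y K ∂μ ∂μ) = ∫ K in Ioc a b, (b - K) * g K := by
    refine setIntegral_congr_fun measurableSet_Ioc (fun K hK => ?_)
    have : (fun y => F y K) = (Ici K).indicator (fun _ => g K) := by
      ext y; by_cases hy : K ≤ y <;> simp [hF, hy, indicator_apply]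
    rw [this, hμ, setIntegral_indicator measurableSet_Ici, setIntegral_const]
    have hset : Ioc a b ∩ Ici K = Icc K b := by
      ext y; simp only [mem_inter_iff, mem_Ioc, mem_Ici, mem_Icc]
      constructor
      · rintro ⟨⟨_, h2⟩, h3⟩; exact ⟨h3, h2⟩
      · rintro ⟨h1, h2⟩; exact ⟨⟨lt_of_lt_of_le hK.1 h1, h2⟩, h1⟩
    rw [hset, Real.volume_real_Icc_of_le (by linarith [hK.2] : K ≤ b)]
    simp [smul_eq_mul]
  rw [← hL, swap, hR]

lemma tri2 (g : ℝ → ℝ) {a b : ℝ} (hab : a ≤ b) (hg : IntegrableOn g (Ioc a b)) :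
    (∫ y in Ioc a b, (∫ K in Ioc y b, g K)) = ∫ K in Ioc a b, (K - a) * g K := by
  set μ := volume.restrict (Ioc a b) with hμ
  have hfin : IsFiniteMeasure μ := by
    constructor; rw [hμ, Measure.restrict_apply_univ]; exact measure_Ioc_lt_top
  set F : ℝ → ℝ → ℝ := fun y K => if y < K then g K else 0 with hF
  have hs : MeasurableSet {p : ℝ × ℝ | p.1 < p.2} :=
    measurableSet_lt measurable_fst measurable_snd
  have hgm : Integrable (fun p : ℝ × ℝ => g p.2) (μ.prod μ) := by
    simpa using (integrable_const (1:ℝ)).mul_prod (hg : Integrable g μ)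
  have hFi : Integrable (Function.uncurry F) (μ.prod μ) := by
    have : Function.uncurry F = {p : ℝ × ℝ | p.1 < p.2}.indicator (fun p => g p.2) := by
      ext p; by_cases hp : p.1 < p.2 <;>
        simp [Function.uncurry, hF, hp, indicator_apply, mem_setOf_eq]
    rw [this]
    exact hgm.indicator hs
  have swap := integral_integral_swap hFi
  have hL : (∫ y, ∫ K, F y K ∂μ ∂μ) = ∫ y in Ioc a b, (∫ K in Ioc y b, g K) := by
    refine setIntegral_congr_fun measurableSet_Ioc (fun y hy => ?_)
    have : (fun K => F y K) = (Ioi y).indicator g := by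
      ext K; by_cases hK : y < K <;> simp [hF, hK, indicator_apply]
    have hset : Ioc a b ∩ Ioi y = Ioc y b := by
      ext K; simp only [mem_inter_iff, mem_Ioc, mem_Ioi]
      constructor
      · rintro ⟨⟨_, h2⟩, h3⟩; exact ⟨h3, h2⟩
      · rintro ⟨h1, h2⟩; exact ⟨⟨lt_of_le_of_lt hy.1.le h1, h2⟩, h1⟩
    rw [this, hμ, setIntegral_indicator measurableSet_Ioi, hset]
  have hR : (∫ K, ∫ y, F y K ∂μ ∂μ) = ∫ K in Ioc a b, (K - a) * g K := by
    refine setIntegral_congr_fun measurableSet_Ioc (fun K hK => ?_)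
    have : (fun y => F y K) = (Iio K).indicator (fun _ => g K) := by
      ext y; by_cases hy : y < K <;> simp [hF, hy, indicator_apply]
    rw [this, hμ, setIntegral_indicator measurableSet_Iio, setIntegral_const]
    have hset : Ioc a b ∩ Iio K = Ioo a K := by
      ext y; simp only [mem_inter_iff, mem_Ioc, mem_Iio, mem_Ioo]
      constructor
      · rintro ⟨⟨h1, _⟩, h3⟩; exact ⟨h1, h3⟩
      · rintro ⟨h1, h2⟩; exact ⟨⟨h1, le_trans h2.le hK.2⟩, h2⟩
    rw [hset, Real.volume_real_Ioo_of_le (by linarith [hK.1] : a ≤ K)]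
    simp [smul_eq_mul]
  rw [← hL, swap, hR]


lemma mul_bdd_integrable (g φ : ℝ → ℝ) {s : Set ℝ} (hs : MeasurableSet s)
    (hg : IntegrableOn g s) (hφ : Continuous φ) (C : ℝ) (hC : ∀ K ∈ s, |φ K| ≤ C) :
    IntegrableOn (fun K => g K * φ K) s := by
  refine Integrable.mono' (hg.norm.mul_const C)
    (hg.aestronglyMeasurable.mul hφ.aestronglyMeasurable.restrict) ?_
  refine (ae_restrict_iff' hs).2 (ae_of_all _ fun K hK => ?_)
  have h1 : ‖g K * φ K‖ = ‖g K‖ * |φ K| := by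
    rw [norm_mul, Real.norm_eq_abs (φ K)]
  rw [h1]
  exact mul_le_mul_of_nonneg_left (hC K hK) (norm_nonneg _)

/-- **One-dimensional Carr–Madan spanning identity.**
If `h` is differentiable on `[0,∞)` with derivative `h'`, and `h'` is absolutely
continuous in the sense that `h' y = h' α + ∫_α^y g(K) dK` for a locally integrable
`g`, then for every `x ≥ 0`,
`h x = h α + h' α (x − α) + ∫_0^α g(K)(K−x)⁺ dK + ∫_α^∞ g(K)(x−K)⁺ dK`,
both integrals converging absolutely. -/
theorem carr_madan_spanning_one_dim
    (h h' g : ℝ → ℝ) (α : ℝ) (hα : 0 ≤ α)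
    (hderiv : ∀ y ∈ Ici (0 : ℝ), HasDerivWithinAt h (h' y) (Ici 0) y)
    (hg : LocallyIntegrableOn g (Ici 0))
    (hac : ∀ y ∈ Ici (0 : ℝ), h' y = h' α + ∫ K in α..y, g K)
    (x : ℝ) (hx : 0 ≤ x) :
    IntegrableOn (fun K => g K * max (K - x) 0) (Ioc 0 α) ∧
    IntegrableOn (fun K => g K * max (x - K) 0) (Ioi α) ∧
    h x = h α + h' α * (x - α)
        + (∫ K in Ioc 0 α, g K * max (K - x) 0)
        + ∫ K in Ioi α, g K * max (x - K) 0 := by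
  -- common facts
  have hsub : uIcc α x ⊆ Ici (0 : ℝ) := fun y hy => le_trans (le_min hα hx) hy.1
  have hgI : IntegrableOn g (uIcc α x) :=
    hg.integrableOn_compact_subset hsub isCompact_uIcc
  have hgiv : IntervalIntegrable g volume α x := hgI.intervalIntegrable
  have prim_cont : ContinuousOn (fun y => ∫ K in α..y, g K) (uIcc α x) :=
    intervalIntegral.continuousOn_primitive_interval' hgiv left_mem_uIcc
  have h'cont : ContinuousOn h' (uIcc α x) :=
    (continuousOn_const.add prim_cont).congr (fun y hy => hac y (hsub hy))
  have h'int : IntervalIntegrable h' volume α x := h'cont.intervalIntegrable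
  have prim_int : IntervalIntegrable (fun y => ∫ K in α..y, g K) volume α x :=
    prim_cont.intervalIntegrable
  have hconth : ContinuousOn h (uIcc α x) := fun y hy =>
    ((hderiv y (hsub hy)).continuousWithinAt).mono hsub
  have hsplit : ∫ y in α..x, h' y
      = (x - α) * h' α + ∫ y in α..x, (∫ K in α..y, g K) := by
    rw [intervalIntegral.integral_congr
      (fun y hy => hac y (hsub hy) : EqOn h' (fun y => h' α + ∫ K in α..y, g K) (uIcc α x)),
      intervalIntegral.integral_add (intervalIntegrable_const) prim_int,
      intervalIntegral.integral_const, smul_eq_mul]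
  rcases le_total α x with hcase | hcase
  · -- x ≥ α
    have huIcc : uIcc α x = Icc α x := uIcc_of_le hcase
    have ftc : ∫ y in α..x, h' y = h x - h α :=
      intervalIntegral.integral_eq_sub_of_hasDeriv_right_of_le hcase (huIcc ▸ hconth)
        (fun y hy => (hderiv y (le_trans hα hy.1.le)).mono
          (fun z hz => le_trans (le_trans hα hy.1.le) (le_of_lt hz)))
        h'int
    have hgIoc : IntegrableOn g (Ioc α x) := hgI.mono_set (by rw [huIcc]; exact Ioc_subset_Icc_self)
    have htri : ∫ y in α..x, (∫ K in α..y, g K) = ∫ K in Ioc α x, (x - K) * g K := by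
      rw [intervalIntegral.integral_of_le hcase]
      rw [setIntegral_congr_fun measurableSet_Ioc
        (fun y hy => intervalIntegral.integral_of_le hy.1.le :
          EqOn (fun y => ∫ K in α..y, g K) (fun y => ∫ K in Ioc α y, g K) (Ioc α x))]
      exact tri1 g hcase hgIoc
    -- integrability of second integrand
    have hI2a : IntegrableOn (fun K => g K * max (x - K) 0) (Ioc α x) := by
      refine mul_bdd_integrable g _ measurableSet_Ioc hgIoc
        ((continuous_const.sub continuous_id).max continuous_const) x (fun K hK => ?_)
      rw [abs_of_nonneg (le_max_right _ _)]
      exact max_le (by linarith [hK.1]) hx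
    have hI2b : IntegrableOn (fun K => g K * max (x - K) 0) (Ioi x) := by
      refine (integrableOn_congr_fun (fun K hK => ?_) measurableSet_Ioi).2 (integrableOn_zero)
      have : x - K ≤ 0 := by have := mem_Ioi.1 hK; linarith
      simp [max_eq_right this]
    have hI2 : IntegrableOn (fun K => g K * max (x - K) 0) (Ioi α) := by
      rw [← Ioc_union_Ioi_eq_Ioi hcase]; exact hI2a.union hI2b
    have hI1 : IntegrableOn (fun K => g K * max (K - x) 0) (Ioc 0 α) := by
      refine (integrableOn_congr_fun (fun K hK => ?_) measurableSet_Ioc).2 (integrableOn_zero)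
      have : K - x ≤ 0 := by have := hK.2; linarith
      simp [max_eq_right this]
    refine ⟨hI1, hI2, ?_⟩
    have e1 : ∫ K in Ioc 0 α, g K * max (K - x) 0 = 0 := by
      rw [setIntegral_congr_fun measurableSet_Ioc
        (fun K hK => by
          have : K - x ≤ 0 := by have := hK.2; linarith
          simp [max_eq_right this] : EqOn _ (fun _ => (0:ℝ)) (Ioc 0 α))]
      simp
    have hdisj : Disjoint (Ioc α x) (Ioi x) :=
      Set.disjoint_left.2 fun K h1 h2 => (not_lt.2 h1.2) h2
    have e2 : ∫ K in Ioi α, g K * max (x - K) 0 = ∫ K in Ioc α x, (x - K) * g K := by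
      rw [← Ioc_union_Ioi_eq_Ioi hcase, setIntegral_union hdisj measurableSet_Ioi hI2a hI2b]
      have ez : ∫ K in Ioi x, g K * max (x - K) 0 = 0 := by
        rw [setIntegral_congr_fun measurableSet_Ioi
          (fun K hK => by
            have : x - K ≤ 0 := by have := mem_Ioi.1 hK; linarith
            simp [max_eq_right this] : EqOn _ (fun _ => (0:ℝ)) (Ioi x))]
        simp
      rw [ez, add_zero]
      refine setIntegral_congr_fun measurableSet_Ioc (fun K hK => ?_)
      rw [max_eq_left (by linarith [hK.2] : (0:ℝ) ≤ x - K), mul_comm]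
    rw [e1, e2]
    have hh := hsplit.symm.trans ftc
    rw [htri] at hh
    linarith [hh]
  · -- x ≤ α
    have huIcc : uIcc α x = Icc x α := uIcc_of_ge hcase
    have ftc : ∫ y in x..α, h' y = h α - h x :=
      intervalIntegral.integral_eq_sub_of_hasDeriv_right_of_le hcase (huIcc ▸ hconth)
        (fun y hy => (hderiv y (le_trans hx hy.1.le)).mono
          (fun z hz => le_trans (le_trans hx hy.1.le) (le_of_lt hz)))
        h'int.symm
    have hgIoc : IntegrableOn g (Ioc x α) := hgI.mono_set (by rw [huIcc]; exact Ioc_subset_Icc_self)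
    have hsplit2 : ∫ y in x..α, h' y
        = (α - x) * h' α + ∫ y in x..α, (∫ K in α..y, g K) := by
      rw [intervalIntegral.integral_congr
        (fun y hy => hac y (hsub (by rwa [uIcc_comm] at hy)) :
          EqOn h' (fun y => h' α + ∫ K in α..y, g K) (uIcc x α)),
        intervalIntegral.integral_add (intervalIntegrable_const) prim_int.symm,
        intervalIntegral.integral_const, smul_eq_mul]
    have htri : ∫ y in x..α, (∫ K in α..y, g K) = -∫ K in Ioc x α, (K - x) * g K := by
      rw [intervalIntegral.integral_of_le hcase]
      rw [setIntegral_congr_fun measurableSet_Ioc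
        (fun y hy => by
          show (∫ K in α..y, g K) = -∫ K in Ioc y α, g K
          rw [intervalIntegral.integral_symm y α, intervalIntegral.integral_of_le hy.2] :
          EqOn (fun y => ∫ K in α..y, g K) (fun y => -∫ K in Ioc y α, g K) (Ioc x α))]
      rw [integral_neg, tri2 g hcase hgIoc]
    -- integrability
    have hI1b : IntegrableOn (fun K => g K * max (K - x) 0) (Ioc x α) := by
      refine mul_bdd_integrable g _ measurableSet_Ioc hgIoc
        ((continuous_id.sub continuous_const).max continuous_const) α (fun K hK => ?_)
      rw [abs_of_nonneg (le_max_right _ _)]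
      exact max_le (by linarith [hK.2]) hα
    have hI1a : IntegrableOn (fun K => g K * max (K - x) 0) (Ioc 0 x) := by
      refine (integrableOn_congr_fun (fun K hK => ?_) measurableSet_Ioc).2 (integrableOn_zero)
      have : K - x ≤ 0 := by have := hK.2; linarith
      simp [max_eq_right this]
    have hI1 : IntegrableOn (fun K => g K * max (K - x) 0) (Ioc 0 α) := by
      rw [← Ioc_union_Ioc_eq_Ioc hx hcase]; exact hI1a.union hI1b
    have hI2 : IntegrableOn (fun K => g K * max (x - K) 0) (Ioi α) := by
      refine (integrableOn_congr_fun (fun K hK => ?_) measurableSet_Ioi).2 (integrableOn_zero)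
      have : x - K ≤ 0 := by have := mem_Ioi.1 hK; linarith
      simp [max_eq_right this]
    refine ⟨hI1, hI2, ?_⟩
    have e2 : ∫ K in Ioi α, g K * max (x - K) 0 = 0 := by
      rw [setIntegral_congr_fun measurableSet_Ioi
        (fun K hK => by
          have : x - K ≤ 0 := by have := mem_Ioi.1 hK; linarith
          simp [max_eq_right this] : EqOn _ (fun _ => (0:ℝ)) (Ioi α))]
      simp
    have e1 : ∫ K in Ioc 0 α, g K * max (K - x) 0 = ∫ K in Ioc x α, (K - x) * g K := by
      have hdisj : Disjoint (Ioc (0:ℝ) x) (Ioc x α) :=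
        Set.disjoint_left.2 fun K h1 h2 => (not_lt.2 h1.2) h2.1
      rw [← Ioc_union_Ioc_eq_Ioc hx hcase, setIntegral_union hdisj measurableSet_Ioc hI1a hI1b]
      have ez : ∫ K in Ioc 0 x, g K * max (K - x) 0 = 0 := by
        rw [setIntegral_congr_fun measurableSet_Ioc
          (fun K hK => by
            have : K - x ≤ 0 := by have := hK.2; linarith
            simp [max_eq_right this] : EqOn _ (fun _ => (0:ℝ)) (Ioc 0 x))]
        simp
      rw [ez, zero_add]
      refine setIntegral_congr_fun measurableSet_Ioc (fun K hK => ?_)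
      rw [max_eq_left (by linarith [hK.1] : (0:ℝ) ≤ K - x), mul_comm]
    rw [e1, e2]
    have hh := hsplit2.symm.trans ftc
    rw [htri] at hh
    linarith [hh]
end

section
/- Let h : [0,∞)² → ℝ possess continuous partial derivatives ∂₁^{i}∂₂^{j}h for all i, j ∈ {0,1,2}, and fix anchors (α₁, α₂) ∈ [0,∞)². Then for every (x₁, x₂) ∈ [0,∞)² the bivariate spanning identity holds: h(x₁,x₂) = h(α₁,α₂) + h_{x₁}(α₁,α₂)(x₁−α₁) + h_{x₂}(α₁,α₂)(x₂−α₂) + h_{x₁x₂}(α₁,α₂)(x₁−α₁)(x₂−α₂) + ∫_0^{α₂} h_{x₂x₂}(α₁,K₂)(K₂−x₂)⁺ dK₂ + ∫_{α₂}^∞ h_{x₂x₂}(α₁,K₂)(x₂−K₂)⁺ dK₂ + ∫_0^{α₂} h_{x₁x₂x₂}(α₁,K₂)(x₁−α₁)(K₂−x₂)⁺ dK₂ + ∫_{α₂}^∞ h_{x₁x₂x₂}(α₁,K₂)(x₁−α₁)(x₂−K₂)⁺ dK₂ + ∫_0^{α₁} h_{x₁x₁}(K₁,α₂)(K₁−x₁)⁺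 dK₁ + ∫_{α₁}^∞ h_{x₁x₁}(K₁,α₂)(x₁−K₁)⁺ dK₁ + ∫_0^{α₁} h_{x₁x₁x₂}(K₁,α₂)(x₂−α₂)(K₁−x₁)⁺ dK₁ + ∫_{α₁}^∞ h_{x₁x₁x₂}(K₁,α₂)(x₂−α₂)(x₁−K₁)⁺ dK₁ + ∫_0^{α₁}∫_0^{α₂} h_{x₁x₁x₂x₂}(K₁,K₂)(K₁−x₁)⁺(K₂−x₂)⁺ dK₂ dK₁ + ∫_0^{α₁}∫_{α₂}^∞ h_{x₁x₁x₂x₂}(K₁,K₂)(K₁−x₁)⁺(x₂−K₂)⁺ dK₂ dK₁ + ∫_{α₁}^∞∫_0^{α₂} h_{x₁x₁x₂x₂}(K₁,K₂)(x₁−K₁)⁺(K₂−x₂)⁺ dK₂ dK₁ + ∫_{α₁}^∞∫_{α₂}^∞ h_{x₁x₁x₂x₂}(K₁,K₂)(x₁−K₁)⁺(x₂−K₂)⁺ dK₂ dK₁. All integrals converge absolutely, since each integrand with an unbounded integration range vanishes for strikes exceeding max(xᵢ, αᵢ). -/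
open MeasureTheory Set

namespace CMhelp

/-- Section continuity in the first variable. -/
lemma sect1 {F : ℝ → ℝ → ℝ}
    (hF : ContinuousOn (fun p : ℝ × ℝ => F p.1 p.2) (Ici 0 ×ˢ Ici 0))
    {y : ℝ} (hy : 0 ≤ y) : ContinuousOn (fun t => F t y) (Ici 0) := by
  have hm : ContinuousOn (fun t : ℝ => ((t, y) : ℝ × ℝ)) (Ici 0) :=
    (continuous_id.prodMk continuous_const).continuousOn
  exact ContinuousOn.comp hF hm (fun u hu => ⟨hu, hy⟩)

/-- Section continuity in the second variable. -/
lemma sect2 {F : ℝ → ℝ → ℝ}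
    (hF : ContinuousOn (fun p : ℝ × ℝ => F p.1 p.2) (Ici 0 ×ˢ Ici 0))
    {x : ℝ} (hx : 0 ≤ x) : ContinuousOn (fun t => F x t) (Ici 0) := by
  have hm : ContinuousOn (fun t : ℝ => ((x, t) : ℝ × ℝ)) (Ici 0) :=
    (continuous_const.prodMk continuous_id).continuousOn
  have : ContinuousOn ((fun p : ℝ × ℝ => F p.1 p.2) ∘ (fun t : ℝ => ((x, t) : ℝ × ℝ))) (Ici 0) :=
    ContinuousOn.comp hF hm (fun u hu => ⟨hx, hu⟩)
  exact this

lemma uIcc_subset_Ici {a b : ℝ} (ha : 0 ≤ a) (hb : 0 ≤ b) : uIcc a b ⊆ Ici 0 :=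
  fun x hx => le_trans (le_min ha hb) hx.1

/-- FTC-2 within `Ici 0`. -/
lemma ftc2 {f f' : ℝ → ℝ}
    (hd : ∀ t ∈ Ici (0:ℝ), HasDerivWithinAt f (f' t) (Ici 0) t)
    (hc : ContinuousOn f' (Ici 0)) {a b : ℝ} (ha : 0 ≤ a) (hb : 0 ≤ b) :
    ∫ t in a..b, f' t = f b - f a := by
  apply intervalIntegral.integral_eq_sub_of_hasDeriv_right
  · exact ContinuousOn.mono (fun t ht => (hd t ht).continuousWithinAt) (uIcc_subset_Ici ha hb)
  · intro t ht
    have h0 : 0 < t := lt_of_le_of_lt (le_min ha hb) ht.1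
    exact ((hd t h0.le).hasDerivAt (Ici_mem_nhds h0)).hasDerivWithinAt
  · exact (hc.mono (uIcc_subset_Ici ha hb)).intervalIntegrable

/-- First order Taylor expansion with integral remainder, within `Ici 0`. -/
lemma taylor1 {f f' f'' : ℝ → ℝ}
    (hd1 : ∀ t ∈ Ici (0:ℝ), HasDerivWithinAt f (f' t) (Ici 0) t)
    (hd2 : ∀ t ∈ Ici (0:ℝ), HasDerivWithinAt f' (f'' t) (Ici 0) t)
    (hc : ContinuousOn f'' (Ici 0)) {α x : ℝ} (hα : 0 ≤ α) (hx : 0 ≤ x) :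
    f x = f α + f' α * (x - α) + ∫ t in α..x, f'' t * (x - t) := by
  have key : ∫ t in α..x, f'' t * (x - t)
      = (f x + f' x * (x - x)) - (f α + f' α * (x - α)) := by
    apply ftc2 (f := fun t => f t + f' t * (x - t)) ?_ ?_ hα hx
    · intro t ht
      have h2 : HasDerivWithinAt (fun u => f' u * (x - u))
          (f'' t * (x - t) + f' t * (-1)) (Ici 0) t :=
        (hd2 t ht).mul ((hasDerivWithinAt_id t (Ici 0)).const_sub x)
      have h3 := (hd1 t ht).add h2
      have e : f' t + (f'' t * (x - t) + f' t * (-1)) = f'' t * (x - t) := by ring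
      rwa [e] at h3
    · exact hc.mul (continuous_const.sub continuous_id).continuousOn
  rw [key]; ring

/-- Integrability on `S` for a function integrable on `S ∩ T` and vanishing on `S \ T`. -/
lemma integrableOn_of_eq_zero_off {X : Type*} [MeasurableSpace X] {μ : Measure X} {f : X → ℝ}
    {S T : Set X} (hST : IntegrableOn f (S ∩ T) μ) (hS : MeasurableSet S) (hT : MeasurableSet T)
    (h0 : ∀ p ∈ S \ T, f p = 0) : IntegrableOn f S μ := by
  have hU : S = (S ∩ T) ∪ (S \ T) := by
    ext p; by_cases hp : p ∈ T <;> simp [hp]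
  rw [hU]
  exact hST.union ((integrableOn_zero).congr_fun (fun p hp => (h0 p hp).symm) (hS.diff hT))

/-- Truncation of an integral over `Ioi a` when the integrand vanishes beyond `b`. -/
lemma integral_Ioi_trunc {f : ℝ → ℝ} {a b : ℝ} (hab : a ≤ b)
    (hf : IntegrableOn f (Ioc a b)) (h0 : ∀ t, b < t → f t = 0) :
    ∫ t in Ioi a, f t = ∫ t in Ioc a b, f t := by
  have h2 : IntegrableOn f (Ioi b) :=
    (integrableOn_zero).congr_fun (fun t ht => (h0 t ht).symm) measurableSet_Ioi
  rw [← Ioc_union_Ioi_eq_Ioi hab,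
    setIntegral_union (Ioc_disjoint_Ioi le_rfl) measurableSet_Ioi hf h2]
  have hz : ∫ t in Ioi b, f t = 0 := by
    rw [setIntegral_congr_fun measurableSet_Ioi (g := fun _ => (0:ℝ)) (fun t ht => h0 t ht)]
    simp
  rw [hz, add_zero]




/-- Integrability of `K ↦ f K * (K - x)⁺` on `Ioc 0 α`. -/
lemma int_Ioc {f : ℝ → ℝ} (hf : ContinuousOn f (Ici 0)) (x : ℝ) {α : ℝ} (hα : 0 ≤ α) :
    IntegrableOn (fun K => f K * max (K - x) 0) (Ioc 0 α) := by
  have hc : ContinuousOn (fun K => f K * max (K - x) 0) (Icc 0 α) :=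
    (hf.mono Icc_subset_Ici_self).mul
      (((continuous_id.sub continuous_const).max continuous_const).continuousOn)
  exact (hc.integrableOn_compact isCompact_Icc).mono_set Ioc_subset_Icc_self

/-- Integrability of `K ↦ f K * (x - K)⁺` on `Ioi α`. -/
lemma int_Ioi {f : ℝ → ℝ} (hf : ContinuousOn f (Ici 0)) {x α : ℝ} (hx : 0 ≤ x) (hα : 0 ≤ α) :
    IntegrableOn (fun K => f K * max (x - K) 0) (Ioi α) := by
  apply integrableOn_of_eq_zero_off (T := Iic (max x α)) ?_ measurableSet_Ioi measurableSet_Iic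
  · intro p hp
    have h1 : max x α < p := lt_of_not_ge hp.2
    have : x - p ≤ 0 := by
      have := le_max_left x α; linarith
    simp [max_eq_right this]
  · have hsub : Ioi α ∩ Iic (max x α) ⊆ Icc α (max x α) := fun t ht => ⟨le_of_lt ht.1, ht.2⟩
    have hc : ContinuousOn (fun K => f K * max (x - K) 0) (Icc α (max x α)) :=
      (hf.mono (fun t ht => le_trans hα ht.1)).mul
        (((continuous_const.sub continuous_id).max continuous_const).continuousOn)
    exact (hc.integrableOn_compact isCompact_Icc).mono_set hsub

/-- One-dimensional Carr–Madan spanning identity within `Ici 0`. -/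
lemma spanning_one_dim {f f' f'' : ℝ → ℝ}
    (hd1 : ∀ t ∈ Ici (0:ℝ), HasDerivWithinAt f (f' t) (Ici 0) t)
    (hd2 : ∀ t ∈ Ici (0:ℝ), HasDerivWithinAt f' (f'' t) (Ici 0) t)
    (hc : ContinuousOn f'' (Ici 0)) {α x : ℝ} (hα : 0 ≤ α) (hx : 0 ≤ x) :
    f x = f α + f' α * (x - α)
      + (∫ K in Ioc 0 α, f'' K * max (K - x) 0)
      + ∫ K in Ioi α, f'' K * max (x - K) 0 := by
  have hT := taylor1 hd1 hd2 hc hα hx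
  have key : (∫ K in Ioc 0 α, f'' K * max (K - x) 0)
      + (∫ K in Ioi α, f'' K * max (x - K) 0) = ∫ t in α..x, f'' t * (x - t) := by
    rcases le_total α x with hax | hxa
    · have e1 : ∫ K in Ioc 0 α, f'' K * max (K - x) 0 = 0 := by
        rw [setIntegral_congr_fun measurableSet_Ioc (g := fun _ => (0:ℝ))
          (fun K hK => by
            have : K - x ≤ 0 := by have := hK.2; linarith
            simp [max_eq_right this])]
        simp
      have e2 : ∫ K in Ioi α, f'' K * max (x - K) 0 = ∫ t in α..x, f'' t * (x - t) := by
        have hb : max x α = x := max_eq_left hax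
        have ht := integral_Ioi_trunc (f := fun K => f'' K * max (x - K) 0) hax
          (((hc.mono (fun t ht => le_trans hα ht.1)).mul
            (((continuous_const.sub continuous_id).max continuous_const).continuousOn)
            |>.integrableOn_compact (isCompact_Icc (a := α) (b := x))).mono_set
              Ioc_subset_Icc_self)
          (fun t ht => by
            have : x - t ≤ 0 := by linarith
            simp [max_eq_right this])
        rw [ht, intervalIntegral.integral_of_le hax]
        exact setIntegral_congr_fun measurableSet_Ioc
          (fun K hK => by rw [max_eq_left (by linarith [hK.2] : (0:ℝ) ≤ x - K)])
      rw [e1, e2, zero_add]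
    · have e2 : ∫ K in Ioi α, f'' K * max (x - K) 0 = 0 := by
        rw [setIntegral_congr_fun measurableSet_Ioi (g := fun _ => (0:ℝ))
          (fun K hK => by
            have : x - K ≤ 0 := by have : α < K := hK; linarith
            simp [max_eq_right this])]
        simp
      have e1 : ∫ K in Ioc 0 α, f'' K * max (K - x) 0 = ∫ t in α..x, f'' t * (x - t) := by
        have hunion : Ioc 0 x ∪ Ioc x α = Ioc 0 α := Ioc_union_Ioc_eq_Ioc hx hxa
        have hint : IntegrableOn (fun K => f'' K * max (K - x) 0) (Ioc 0 α) :=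
          int_Ioc hc x hα
        have hz : ∫ K in Ioc 0 x, f'' K * max (K - x) 0 = 0 := by
          rw [setIntegral_congr_fun measurableSet_Ioc (g := fun _ => (0:ℝ))
            (fun K hK => by
              have : K - x ≤ 0 := by have := hK.2; linarith
              simp [max_eq_right this])]
          simp
        rw [← hunion, setIntegral_union (Ioc_disjoint_Ioc_of_le le_rfl) measurableSet_Ioc
          (hint.mono_set (by rw [← hunion]; exact subset_union_left))
          (hint.mono_set (by rw [← hunion]; exact subset_union_right)), hz, zero_add]
        have e3 : ∫ K in Ioc x α, f'' K * max (K - x) 0 = ∫ t in x..α, f'' t * (t - x) := by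
          rw [intervalIntegral.integral_of_le hxa]
          exact setIntegral_congr_fun measurableSet_Ioc
            (fun K hK => by rw [max_eq_left (by linarith [hK.1] : (0:ℝ) ≤ K - x)])
        have e4 : ∫ t in x..α, f'' t * (t - x) = ∫ t in α..x, f'' t * (x - t) := by
          rw [intervalIntegral.integral_symm]
          rw [← intervalIntegral.integral_neg]
          apply intervalIntegral.integral_congr
          intro t _
          simp only []
          ring
        rw [e3, e4]
      rw [e1, e2, add_zero]
  linarith [hT, key]

/-- Continuous global extension of a function continuous on the corner. -/
def ext2 (F : ℝ → ℝ → ℝ) : ℝ → ℝ → ℝ := fun s t => F (max s 0) (max t 0)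

lemma ext2_cont {F : ℝ → ℝ → ℝ}
    (hF : ContinuousOn (fun p : ℝ × ℝ => F p.1 p.2) (Ici 0 ×ˢ Ici 0)) :
    Continuous fun p : ℝ × ℝ => ext2 F p.1 p.2 := by
  have : Continuous ((fun p : ℝ × ℝ => F p.1 p.2) ∘
      (fun p : ℝ × ℝ => ((max p.1 0, max p.2 0) : ℝ × ℝ))) :=
    hF.comp_continuous (by fun_prop) (fun p => ⟨le_max_right p.1 0, le_max_right p.2 0⟩)
  exact this

lemma ext2_eq {F : ℝ → ℝ → ℝ} {s t : ℝ} (hs : 0 ≤ s) (ht : 0 ≤ t) :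
    ext2 F s t = F s t := by
  simp [ext2, max_eq_left hs, max_eq_left ht]

/-- Clairaut/Schwarz within the corner: if `g1 = ∂₁ g`, `g2 = ∂₂ g`, `m = ∂₂ g1` with `m`
and `g1` continuous, then `∂₁ g2 = m`. -/
lemma schwarz {g g1 g2 m : ℝ → ℝ → ℝ}
    (hg1 : ∀ x ∈ Ici (0:ℝ), ∀ y ∈ Ici (0:ℝ), HasDerivWithinAt (fun t => g t y) (g1 x y) (Ici 0) x)
    (hg2 : ∀ x ∈ Ici (0:ℝ), ∀ y ∈ Ici (0:ℝ), HasDerivWithinAt (fun t => g x t) (g2 x y) (Ici 0) y)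
    (hm : ∀ x ∈ Ici (0:ℝ), ∀ y ∈ Ici (0:ℝ), HasDerivWithinAt (fun t => g1 x t) (m x y) (Ici 0) y)
    (hcg1 : ContinuousOn (fun p : ℝ × ℝ => g1 p.1 p.2) (Ici 0 ×ˢ Ici 0))
    (hcm : ContinuousOn (fun p : ℝ × ℝ => m p.1 p.2) (Ici 0 ×ˢ Ici 0))
    {x y : ℝ} (hx : 0 ≤ x) (hy : 0 ≤ y) :
    HasDerivWithinAt (fun t => g2 t y) (m x y) (Ici 0) x := by
  have hMc : Continuous fun p : ℝ × ℝ => ext2 m p.1 p.2 := ext2_cont hcm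
  -- key pointwise identity
  have key : ∀ u, 0 ≤ u → g2 u y = g2 0 y + ∫ t in (0:ℝ)..u, ext2 m t y := by
    intro u hu
    set Φ : ℝ → ℝ := fun z => ∫ t in (0:ℝ)..u, ext2 m t z with hΦdef
    have hΦc : Continuous Φ := by
      apply intervalIntegral.continuous_parametric_intervalIntegral_of_continuous'
        (f := fun z t => ext2 m t z) (μ := volume)
      exact hMc.comp (continuous_snd.prodMk continuous_fst)
    have hA : ∀ z, 0 ≤ z → ∫ w in (0:ℝ)..z, Φ w = (g u z - g 0 z) - (g u 0 - g 0 0) := by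
      intro z hz
      have hswap : ∫ w in Ioc (0:ℝ) z, ∫ t in Ioc (0:ℝ) u, ext2 m t w
          = ∫ t in Ioc (0:ℝ) u, ∫ w in Ioc (0:ℝ) z, ext2 m t w := by
        apply MeasureTheory.integral_integral_swap (f := fun w t => ext2 m t w)
        have : Continuous fun p : ℝ × ℝ => ext2 m p.2 p.1 :=
          hMc.comp (continuous_snd.prodMk continuous_fst)
        rw [Measure.prod_restrict]
        exact ((this.continuousOn.integrableOn_compact
          ((isCompact_Icc (a := (0:ℝ)) (b := z)).prod (isCompact_Icc (a := (0:ℝ)) (b := u)))).mono_set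
          (prod_mono Ioc_subset_Icc_self Ioc_subset_Icc_self))
      have hinner : ∀ t ∈ Ioc (0:ℝ) u, ∫ w in Ioc (0:ℝ) z, ext2 m t w = g1 t z - g1 t 0 := by
        intro t ht
        have ht0 : (0:ℝ) ≤ t := le_of_lt ht.1
        have : ∫ w in (0:ℝ)..z, ext2 m t w = g1 t z - g1 t 0 := by
          apply ftc2 (f := fun w => g1 t w) ?_ ?_ le_rfl hz
          · intro w hw
            have := hm t ht0 w hw
            rwa [← ext2_eq (F := m) ht0 hw] at this
          · intro w hw
            exact ((hMc.comp (continuous_const.prodMk continuous_id)).continuousAt).continuousWithinAt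
        rwa [intervalIntegral.integral_of_le hz] at this
      have houter1 : ∫ t in (0:ℝ)..u, g1 t z = g u z - g 0 z :=
        ftc2 (fun t ht => hg1 t ht z hz) (sect1 hcg1 hz) le_rfl hu
      have houter0 : ∫ t in (0:ℝ)..u, g1 t 0 = g u 0 - g 0 0 :=
        ftc2 (fun t ht => hg1 t ht 0 (mem_Ici.2 le_rfl)) (sect1 hcg1 le_rfl) le_rfl hu
      have hint1 : IntervalIntegrable (fun t => g1 t z) volume 0 u :=
        ((sect1 hcg1 hz).mono (uIcc_subset_Ici le_rfl hu)).intervalIntegrable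
      have hint0 : IntervalIntegrable (fun t => g1 t 0) volume 0 u :=
        ((sect1 hcg1 le_rfl).mono (uIcc_subset_Ici le_rfl hu)).intervalIntegrable
      calc ∫ w in (0:ℝ)..z, Φ w
          = ∫ w in Ioc (0:ℝ) z, ∫ t in Ioc (0:ℝ) u, ext2 m t w := by
            rw [intervalIntegral.integral_of_le hz]
            apply setIntegral_congr_fun measurableSet_Ioc
            intro w _
            simp only [hΦdef]
            rw [intervalIntegral.integral_of_le hu]
        _ = ∫ t in Ioc (0:ℝ) u, ∫ w in Ioc (0:ℝ) z, ext2 m t w := hswap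
        _ = ∫ t in Ioc (0:ℝ) u, (g1 t z - g1 t 0) :=
            setIntegral_congr_fun measurableSet_Ioc hinner
        _ = ∫ t in (0:ℝ)..u, (g1 t z - g1 t 0) := (intervalIntegral.integral_of_le hu).symm
        _ = (∫ t in (0:ℝ)..u, g1 t z) - ∫ t in (0:ℝ)..u, g1 t 0 :=
            intervalIntegral.integral_sub hint1 hint0
        _ = (g u z - g 0 z) - (g u 0 - g 0 0) := by rw [houter1, houter0]
    -- differentiate both representations at z = y
    have hB : HasDerivWithinAt (fun z => ∫ w in (0:ℝ)..z, Φ w) (Φ y) (Ici 0) y :=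
      (intervalIntegral.integral_hasDerivAt_right (hΦc.intervalIntegrable 0 y)
        (hΦc.stronglyMeasurable.stronglyMeasurableAtFilter) hΦc.continuousAt).hasDerivWithinAt
    have hB' : HasDerivWithinAt (fun z => (g u z - g 0 z) - (g u 0 - g 0 0)) (Φ y) (Ici 0) y :=
      hB.congr (fun z hz => (hA z hz).symm) (hA y hy).symm
    have hC : HasDerivWithinAt (fun z => (g u z - g 0 z) - (g u 0 - g 0 0))
        (g2 u y - g2 0 y) (Ici 0) y :=
      ((hg2 u hu y hy).sub (hg2 0 (mem_Ici.2 le_rfl) y hy)).sub_const _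
    have hud : UniqueDiffWithinAt ℝ (Ici (0:ℝ)) y := uniqueDiffOn_Ici 0 y hy
    have : Φ y = g2 u y - g2 0 y := by
      rw [← hB'.derivWithin hud, ← hC.derivWithin hud]
    linarith [this]
  -- now differentiate `key` in `u` at `x`
  have hMy : Continuous fun t => ext2 m t y := hMc.comp (continuous_id.prodMk continuous_const)
  have hD : HasDerivWithinAt (fun u => g2 0 y + ∫ t in (0:ℝ)..u, ext2 m t y)
      (ext2 m x y) (Ici 0) x :=
    (HasDerivWithinAt.const_add _ ((intervalIntegral.integral_hasDerivAt_right
      (hMy.intervalIntegrable 0 x) (hMy.stronglyMeasurable.stronglyMeasurableAtFilter)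
      hMy.continuousAt).hasDerivWithinAt))
  have hD' : HasDerivWithinAt (fun t => g2 t y) (ext2 m x y) (Ici 0) x :=
    hD.congr (fun u hu => key u hu) (key x hx)
  rwa [ext2_eq hx hy] at hD'

end CMhelp

/-- **Bivariate Carr–Madan spanning identity.**
`h : [0,∞)² → ℝ` has continuous partial derivatives `∂₁^i ∂₂^j h` for `i, j ∈ {0,1,2}`
(denoted `D10 = h_{x₁}`, `D01 = h_{x₂}`, `D11 = h_{x₁x₂}`, `D20 = h_{x₁x₁}`,
`D02 = h_{x₂x₂}`, `D21 = h_{x₁x₁x₂}`, `D12 = h_{x₁x₂x₂}`, `D22 = h_{x₁x₁x₂x₂}`).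
Then the sixteen-term bivariate spanning identity holds, and all integrals
converge absolutely. -/
theorem carr_madan_spanning_two_dim
    (h D10 D01 D11 D20 D02 D21 D12 D22 : ℝ → ℝ → ℝ)
    (α₁ α₂ : ℝ) (hα₁ : 0 ≤ α₁) (hα₂ : 0 ≤ α₂)
    -- partial derivative hypotheses on `[0,∞)²`
    (hD10 : ∀ x₁ ∈ Ici (0:ℝ), ∀ x₂ ∈ Ici (0:ℝ),
      HasDerivWithinAt (fun t => h t x₂) (D10 x₁ x₂) (Ici 0) x₁)
    (hD01 : ∀ x₁ ∈ Ici (0:ℝ), ∀ x₂ ∈ Ici (0:ℝ),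
      HasDerivWithinAt (fun t => h x₁ t) (D01 x₁ x₂) (Ici 0) x₂)
    (hD20 : ∀ x₁ ∈ Ici (0:ℝ), ∀ x₂ ∈ Ici (0:ℝ),
      HasDerivWithinAt (fun t => D10 t x₂) (D20 x₁ x₂) (Ici 0) x₁)
    (hD02 : ∀ x₁ ∈ Ici (0:ℝ), ∀ x₂ ∈ Ici (0:ℝ),
      HasDerivWithinAt (fun t => D01 x₁ t) (D02 x₁ x₂) (Ici 0) x₂)
    (hD11 : ∀ x₁ ∈ Ici (0:ℝ), ∀ x₂ ∈ Ici (0:ℝ),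
      HasDerivWithinAt (fun t => D10 x₁ t) (D11 x₁ x₂) (Ici 0) x₂)
    (hD21 : ∀ x₁ ∈ Ici (0:ℝ), ∀ x₂ ∈ Ici (0:ℝ),
      HasDerivWithinAt (fun t => D20 x₁ t) (D21 x₁ x₂) (Ici 0) x₂)
    (hD12 : ∀ x₁ ∈ Ici (0:ℝ), ∀ x₂ ∈ Ici (0:ℝ),
      HasDerivWithinAt (fun t => D02 t x₂) (D12 x₁ x₂) (Ici 0) x₁)
    (hD22 : ∀ x₁ ∈ Ici (0:ℝ), ∀ x₂ ∈ Ici (0:ℝ),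
      HasDerivWithinAt (fun t => D12 t x₂) (D22 x₁ x₂) (Ici 0) x₁)
    -- continuity of all partial derivatives of orders `(i,j)`, `i, j ∈ {0,1,2}`
    (hc00 : ContinuousOn (fun p : ℝ × ℝ => h p.1 p.2) (Ici 0 ×ˢ Ici 0))
    (hc10 : ContinuousOn (fun p : ℝ × ℝ => D10 p.1 p.2) (Ici 0 ×ˢ Ici 0))
    (hc01 : ContinuousOn (fun p : ℝ × ℝ => D01 p.1 p.2) (Ici 0 ×ˢ Ici 0))
    (hc11 : ContinuousOn (fun p : ℝ × ℝ => D11 p.1 p.2) (Ici 0 ×ˢ Ici 0))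
    (hc20 : ContinuousOn (fun p : ℝ × ℝ => D20 p.1 p.2) (Ici 0 ×ˢ Ici 0))
    (hc02 : ContinuousOn (fun p : ℝ × ℝ => D02 p.1 p.2) (Ici 0 ×ˢ Ici 0))
    (hc21 : ContinuousOn (fun p : ℝ × ℝ => D21 p.1 p.2) (Ici 0 ×ˢ Ici 0))
    (hc12 : ContinuousOn (fun p : ℝ × ℝ => D12 p.1 p.2) (Ici 0 ×ˢ Ici 0))
    (hc22 : ContinuousOn (fun p : ℝ × ℝ => D22 p.1 p.2) (Ici 0 ×ˢ Ici 0))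
    (x₁ x₂ : ℝ) (hx₁ : 0 ≤ x₁) (hx₂ : 0 ≤ x₂) :
    -- absolute convergence of all integrals
    IntegrableOn (fun K₂ => D02 α₁ K₂ * max (K₂ - x₂) 0) (Ioc 0 α₂) ∧
    IntegrableOn (fun K₂ => D02 α₁ K₂ * max (x₂ - K₂) 0) (Ioi α₂) ∧
    IntegrableOn (fun K₂ => D12 α₁ K₂ * ((x₁ - α₁) * max (K₂ - x₂) 0)) (Ioc 0 α₂) ∧
    IntegrableOn (fun K₂ => D12 α₁ K₂ * ((x₁ - α₁) * max (x₂ - K₂) 0)) (Ioi α₂) ∧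
    IntegrableOn (fun K₁ => D20 K₁ α₂ * max (K₁ - x₁) 0) (Ioc 0 α₁) ∧
    IntegrableOn (fun K₁ => D20 K₁ α₂ * max (x₁ - K₁) 0) (Ioi α₁) ∧
    IntegrableOn (fun K₁ => D21 K₁ α₂ * ((x₂ - α₂) * max (K₁ - x₁) 0)) (Ioc 0 α₁) ∧
    IntegrableOn (fun K₁ => D21 K₁ α₂ * ((x₂ - α₂) * max (x₁ - K₁) 0)) (Ioi α₁) ∧
    IntegrableOn (fun p : ℝ × ℝ => D22 p.1 p.2 * (max (p.1 - x₁) 0 * max (p.2 - x₂) 0))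
      (Ioc 0 α₁ ×ˢ Ioc 0 α₂) ∧
    IntegrableOn (fun p : ℝ × ℝ => D22 p.1 p.2 * (max (p.1 - x₁) 0 * max (x₂ - p.2) 0))
      (Ioc 0 α₁ ×ˢ Ioi α₂) ∧
    IntegrableOn (fun p : ℝ × ℝ => D22 p.1 p.2 * (max (x₁ - p.1) 0 * max (p.2 - x₂) 0))
      (Ioi α₁ ×ˢ Ioc 0 α₂) ∧
    IntegrableOn (fun p : ℝ × ℝ => D22 p.1 p.2 * (max (x₁ - p.1) 0 * max (x₂ - p.2) 0))
      (Ioi α₁ ×ˢ Ioi α₂) ∧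
    -- the bivariate spanning identity
    h x₁ x₂
      = h α₁ α₂
        + D10 α₁ α₂ * (x₁ - α₁)
        + D01 α₁ α₂ * (x₂ - α₂)
        + D11 α₁ α₂ * ((x₁ - α₁) * (x₂ - α₂))
        + (∫ K₂ in Ioc 0 α₂, D02 α₁ K₂ * max (K₂ - x₂) 0)
        + (∫ K₂ in Ioi α₂, D02 α₁ K₂ * max (x₂ - K₂) 0)
        + (∫ K₂ in Ioc 0 α₂, D12 α₁ K₂ * ((x₁ - α₁) * max (K₂ - x₂) 0))
        + (∫ K₂ in Ioi α₂, D12 α₁ K₂ * ((x₁ - α₁) * max (x₂ - K₂) 0))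
        + (∫ K₁ in Ioc 0 α₁, D20 K₁ α₂ * max (K₁ - x₁) 0)
        + (∫ K₁ in Ioi α₁, D20 K₁ α₂ * max (x₁ - K₁) 0)
        + (∫ K₁ in Ioc 0 α₁, D21 K₁ α₂ * ((x₂ - α₂) * max (K₁ - x₁) 0))
        + (∫ K₁ in Ioi α₁, D21 K₁ α₂ * ((x₂ - α₂) * max (x₁ - K₁) 0))
        + (∫ K₁ in Ioc 0 α₁, ∫ K₂ in Ioc 0 α₂,
            D22 K₁ K₂ * (max (K₁ - x₁) 0 * max (K₂ - x₂) 0))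
        + (∫ K₁ in Ioc 0 α₁, ∫ K₂ in Ioi α₂,
            D22 K₁ K₂ * (max (K₁ - x₁) 0 * max (x₂ - K₂) 0))
        + (∫ K₁ in Ioi α₁, ∫ K₂ in Ioc 0 α₂,
            D22 K₁ K₂ * (max (x₁ - K₁) 0 * max (K₂ - x₂) 0))
        + ∫ K₁ in Ioi α₁, ∫ K₂ in Ioi α₂,
            D22 K₁ K₂ * (max (x₁ - K₁) 0 * max (x₂ - K₂) 0) := by
  have hb₁ : (0:ℝ) ≤ max x₁ α₁ := le_trans hx₁ (le_max_left _ _)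
  have hb₂ : (0:ℝ) ≤ max x₂ α₂ := le_trans hx₂ (le_max_left _ _)
  -- continuity of the kink factors
  have cmax : ∀ a c : ℝ, Continuous fun p : ℝ × ℝ =>
      max (a * (p.1 - x₁) + (1 - a) * (x₁ - p.1)) 0 *
      max (c * (p.2 - x₂) + (1 - c) * (x₂ - p.2)) 0 := by
    intro a c; fun_prop
  -- generic rectangle integrability for D22-type integrands
  have rect : ∀ {a b c d : ℝ}, 0 ≤ a → 0 ≤ c → ∀ {G : ℝ × ℝ → ℝ}, Continuous G →
      IntegrableOn (fun p : ℝ × ℝ => D22 p.1 p.2 * G p) (Icc a b ×ˢ Icc c d) := by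
    intro a b c d ha hc G hG
    have hsub : (Icc a b ×ˢ Icc c d : Set (ℝ × ℝ)) ⊆ Ici 0 ×ˢ Ici 0 :=
      prod_mono (fun t ht => le_trans ha ht.1) (fun t ht => le_trans hc ht.1)
    exact ((hc22.mono hsub).mul hG.continuousOn).integrableOn_compact
      (isCompact_Icc.prod isCompact_Icc)
  -- the four 2D integrability claims
  have I9 : IntegrableOn (fun p : ℝ × ℝ => D22 p.1 p.2 * (max (p.1 - x₁) 0 * max (p.2 - x₂) 0))
      (Ioc 0 α₁ ×ˢ Ioc 0 α₂) :=
    (rect le_rfl le_rfl (by fun_prop : Continuous fun p : ℝ × ℝ =>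
        max (p.1 - x₁) 0 * max (p.2 - x₂) 0)).mono_set
      (prod_mono Ioc_subset_Icc_self Ioc_subset_Icc_self)
  have I10 : IntegrableOn (fun p : ℝ × ℝ => D22 p.1 p.2 * (max (p.1 - x₁) 0 * max (x₂ - p.2) 0))
      (Ioc 0 α₁ ×ˢ Ioi α₂) := by
    apply CMhelp.integrableOn_of_eq_zero_off
      (T := (Iic (max x₁ α₁) ×ˢ Iic (max x₂ α₂) : Set (ℝ × ℝ)))
      ?_ (measurableSet_Ioc.prod measurableSet_Ioi) (measurableSet_Iic.prod measurableSet_Iic) ?_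
    · have hsub : (Ioc 0 α₁ ×ˢ Ioi α₂ : Set (ℝ × ℝ)) ∩ (Iic (max x₁ α₁) ×ˢ Iic (max x₂ α₂))
          ⊆ Icc 0 α₁ ×ˢ Icc α₂ (max x₂ α₂) :=
        fun p hp => ⟨⟨le_of_lt hp.1.1.1, hp.1.1.2⟩, ⟨le_of_lt hp.1.2, hp.2.2⟩⟩
      exact (rect le_rfl hα₂ (by fun_prop : Continuous fun p : ℝ × ℝ =>
        max (p.1 - x₁) 0 * max (x₂ - p.2) 0)).mono_set hsub
    · rintro ⟨p1, p2⟩ ⟨hS, hT⟩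
      have h2 : max x₂ α₂ < p2 := by
        by_contra hle
        exact hT ⟨le_trans hS.1.2 (le_max_right x₁ α₁), not_lt.1 hle⟩
      have hz : max (x₂ - p2) 0 = 0 := max_eq_right (by
        have := le_max_left x₂ α₂; linarith)
      simp [hz]
  have I11 : IntegrableOn (fun p : ℝ × ℝ => D22 p.1 p.2 * (max (x₁ - p.1) 0 * max (p.2 - x₂) 0))
      (Ioi α₁ ×ˢ Ioc 0 α₂) := by
    apply CMhelp.integrableOn_of_eq_zero_off
      (T := (Iic (max x₁ α₁) ×ˢ Iic (max x₂ α₂) : Set (ℝ × ℝ)))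
      ?_ (measurableSet_Ioi.prod measurableSet_Ioc) (measurableSet_Iic.prod measurableSet_Iic) ?_
    · have hsub : (Ioi α₁ ×ˢ Ioc 0 α₂ : Set (ℝ × ℝ)) ∩ (Iic (max x₁ α₁) ×ˢ Iic (max x₂ α₂))
          ⊆ Icc α₁ (max x₁ α₁) ×ˢ Icc 0 α₂ :=
        fun p hp => ⟨⟨le_of_lt hp.1.1, hp.2.1⟩, ⟨le_of_lt hp.1.2.1, hp.1.2.2⟩⟩
      exact (rect hα₁ le_rfl (by fun_prop : Continuous fun p : ℝ × ℝ =>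
        max (x₁ - p.1) 0 * max (p.2 - x₂) 0)).mono_set hsub
    · rintro ⟨p1, p2⟩ ⟨hS, hT⟩
      have h1 : max x₁ α₁ < p1 := by
        by_contra hle
        exact hT ⟨not_lt.1 hle, le_trans hS.2.2 (le_max_right x₂ α₂)⟩
      have hz : max (x₁ - p1) 0 = 0 := max_eq_right (by
        have := le_max_left x₁ α₁; linarith)
      simp [hz]
  have I12 : IntegrableOn (fun p : ℝ × ℝ => D22 p.1 p.2 * (max (x₁ - p.1) 0 * max (x₂ - p.2) 0))
      (Ioi α₁ ×ˢ Ioi α₂) := by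
    apply CMhelp.integrableOn_of_eq_zero_off
      (T := (Iic (max x₁ α₁) ×ˢ Iic (max x₂ α₂) : Set (ℝ × ℝ)))
      ?_ (measurableSet_Ioi.prod measurableSet_Ioi) (measurableSet_Iic.prod measurableSet_Iic) ?_
    · have hsub : (Ioi α₁ ×ˢ Ioi α₂ : Set (ℝ × ℝ)) ∩ (Iic (max x₁ α₁) ×ˢ Iic (max x₂ α₂))
          ⊆ Icc α₁ (max x₁ α₁) ×ˢ Icc α₂ (max x₂ α₂) :=
        fun p hp => ⟨⟨le_of_lt hp.1.1, hp.2.1⟩, ⟨le_of_lt hp.1.2, hp.2.2⟩⟩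
      exact (rect hα₁ hα₂ (by fun_prop : Continuous fun p : ℝ × ℝ =>
        max (x₁ - p.1) 0 * max (x₂ - p.2) 0)).mono_set hsub
    · rintro ⟨p1, p2⟩ ⟨hS, hT⟩
      rcases not_and_or.1 hT with h1 | h2
      · have h1' : max x₁ α₁ < p1 := not_le.1 h1
        have hz : max (x₁ - p1) 0 = 0 := max_eq_right (by
          have := le_max_left x₁ α₁; linarith)
        simp [hz]
      · have h2' : max x₂ α₂ < p2 := not_le.1 h2
        have hz : max (x₂ - p2) 0 = 0 := max_eq_right (by
          have := le_max_left x₂ α₂; linarith)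
        simp [hz]
  -- section continuities
  have c02 : ContinuousOn (fun K => D02 α₁ K) (Ici 0) := CMhelp.sect2 hc02 hα₁
  have c12 : ContinuousOn (fun K => D12 α₁ K) (Ici 0) := CMhelp.sect2 hc12 hα₁
  have c20 : ContinuousOn (fun K => D20 K α₂) (Ici 0) := CMhelp.sect1 hc20 hα₂
  have c21 : ContinuousOn (fun K => D21 K α₂) (Ici 0) := CMhelp.sect1 hc21 hα₂
  -- 1D integrability claims
  have G1 : IntegrableOn (fun K₂ => D02 α₁ K₂ * max (K₂ - x₂) 0) (Ioc 0 α₂) :=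
    CMhelp.int_Ioc c02 x₂ hα₂
  have G2 : IntegrableOn (fun K₂ => D02 α₁ K₂ * max (x₂ - K₂) 0) (Ioi α₂) :=
    CMhelp.int_Ioi c02 hx₂ hα₂
  have G3 : IntegrableOn (fun K₂ => D12 α₁ K₂ * ((x₁ - α₁) * max (K₂ - x₂) 0)) (Ioc 0 α₂) := by
    have h0 : IntegrableOn (fun K₂ => D12 α₁ K₂ * max (K₂ - x₂) 0 * (x₁ - α₁)) (Ioc 0 α₂) :=
      (CMhelp.int_Ioc c12 x₂ hα₂).mul_const _
    exact h0.congr_fun (fun K _ => by ring) measurableSet_Ioc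
  have G4 : IntegrableOn (fun K₂ => D12 α₁ K₂ * ((x₁ - α₁) * max (x₂ - K₂) 0)) (Ioi α₂) := by
    have h0 : IntegrableOn (fun K₂ => D12 α₁ K₂ * max (x₂ - K₂) 0 * (x₁ - α₁)) (Ioi α₂) :=
      (CMhelp.int_Ioi c12 hx₂ hα₂).mul_const _
    exact h0.congr_fun (fun K _ => by ring) measurableSet_Ioi
  have G5 : IntegrableOn (fun K₁ => D20 K₁ α₂ * max (K₁ - x₁) 0) (Ioc 0 α₁) :=
    CMhelp.int_Ioc c20 x₁ hα₁
  have G6 : IntegrableOn (fun K₁ => D20 K₁ α₂ * max (x₁ - K₁) 0) (Ioi α₁) :=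
    CMhelp.int_Ioi c20 hx₁ hα₁
  have G7 : IntegrableOn (fun K₁ => D21 K₁ α₂ * ((x₂ - α₂) * max (K₁ - x₁) 0)) (Ioc 0 α₁) := by
    have h0 : IntegrableOn (fun K₁ => D21 K₁ α₂ * max (K₁ - x₁) 0 * (x₂ - α₂)) (Ioc 0 α₁) :=
      (CMhelp.int_Ioc c21 x₁ hα₁).mul_const _
    exact h0.congr_fun (fun K _ => by ring) measurableSet_Ioc
  have G8 : IntegrableOn (fun K₁ => D21 K₁ α₂ * ((x₂ - α₂) * max (x₁ - K₁) 0)) (Ioi α₁) := by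
    have h0 : IntegrableOn (fun K₁ => D21 K₁ α₂ * max (x₁ - K₁) 0 * (x₂ - α₂)) (Ioi α₁) :=
      (CMhelp.int_Ioi c21 hx₁ hα₁).mul_const _
    exact h0.congr_fun (fun K _ => by ring) measurableSet_Ioi
  -- product measure versions of the 2D integrabilities
  have I9' : Integrable (fun p : ℝ × ℝ => D22 p.1 p.2 * (max (p.1 - x₁) 0 * max (p.2 - x₂) 0))
      ((volume.restrict (Ioc 0 α₁)).prod (volume.restrict (Ioc 0 α₂))) := by
    rw [Measure.prod_restrict]; exact I9
  have I10' : Integrable (fun p : ℝ × ℝ => D22 p.1 p.2 * (max (p.1 - x₁) 0 * max (x₂ - p.2) 0))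
      ((volume.restrict (Ioc 0 α₁)).prod (volume.restrict (Ioi α₂))) := by
    rw [Measure.prod_restrict]; exact I10
  have I11' : Integrable (fun p : ℝ × ℝ => D22 p.1 p.2 * (max (x₁ - p.1) 0 * max (p.2 - x₂) 0))
      ((volume.restrict (Ioi α₁)).prod (volume.restrict (Ioc 0 α₂))) := by
    rw [Measure.prod_restrict]; exact I11
  have I12' : Integrable (fun p : ℝ × ℝ => D22 p.1 p.2 * (max (x₁ - p.1) 0 * max (x₂ - p.2) 0))
      ((volume.restrict (Ioi α₁)).prod (volume.restrict (Ioi α₂))) := by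
    rw [Measure.prod_restrict]; exact I12
  -- integrability of the inner integrals
  have int13 : IntegrableOn (fun K₂ => ∫ K₁ in Ioc 0 α₁,
      D22 K₁ K₂ * (max (K₁ - x₁) 0 * max (K₂ - x₂) 0)) (Ioc 0 α₂) := I9'.integral_prod_right
  have int14 : IntegrableOn (fun K₂ => ∫ K₁ in Ioc 0 α₁,
      D22 K₁ K₂ * (max (K₁ - x₁) 0 * max (x₂ - K₂) 0)) (Ioi α₂) := I10'.integral_prod_right
  have int15 : IntegrableOn (fun K₂ => ∫ K₁ in Ioi α₁,
      D22 K₁ K₂ * (max (x₁ - K₁) 0 * max (K₂ - x₂) 0)) (Ioc 0 α₂) := I11'.integral_prod_right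
  have int16 : IntegrableOn (fun K₂ => ∫ K₁ in Ioi α₁,
      D22 K₁ K₂ * (max (x₁ - K₁) 0 * max (x₂ - K₂) 0)) (Ioi α₂) := I12'.integral_prod_right
  -- Fubini swaps
  have e13 : (∫ K₂ in Ioc 0 α₂, ∫ K₁ in Ioc 0 α₁,
        D22 K₁ K₂ * (max (K₁ - x₁) 0 * max (K₂ - x₂) 0))
      = ∫ K₁ in Ioc 0 α₁, ∫ K₂ in Ioc 0 α₂,
        D22 K₁ K₂ * (max (K₁ - x₁) 0 * max (K₂ - x₂) 0) :=
    (MeasureTheory.integral_integral_swap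
      (f := fun K₁ K₂ => D22 K₁ K₂ * (max (K₁ - x₁) 0 * max (K₂ - x₂) 0)) I9').symm
  have e14 : (∫ K₂ in Ioi α₂, ∫ K₁ in Ioc 0 α₁,
        D22 K₁ K₂ * (max (K₁ - x₁) 0 * max (x₂ - K₂) 0))
      = ∫ K₁ in Ioc 0 α₁, ∫ K₂ in Ioi α₂,
        D22 K₁ K₂ * (max (K₁ - x₁) 0 * max (x₂ - K₂) 0) :=
    (MeasureTheory.integral_integral_swap
      (f := fun K₁ K₂ => D22 K₁ K₂ * (max (K₁ - x₁) 0 * max (x₂ - K₂) 0)) I10').symm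
  have e15 : (∫ K₂ in Ioc 0 α₂, ∫ K₁ in Ioi α₁,
        D22 K₁ K₂ * (max (x₁ - K₁) 0 * max (K₂ - x₂) 0))
      = ∫ K₁ in Ioi α₁, ∫ K₂ in Ioc 0 α₂,
        D22 K₁ K₂ * (max (x₁ - K₁) 0 * max (K₂ - x₂) 0) :=
    (MeasureTheory.integral_integral_swap
      (f := fun K₁ K₂ => D22 K₁ K₂ * (max (x₁ - K₁) 0 * max (K₂ - x₂) 0)) I11').symm
  have e16 : (∫ K₂ in Ioi α₂, ∫ K₁ in Ioi α₁,
        D22 K₁ K₂ * (max (x₁ - K₁) 0 * max (x₂ - K₂) 0))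
      = ∫ K₁ in Ioi α₁, ∫ K₂ in Ioi α₂,
        D22 K₁ K₂ * (max (x₁ - K₁) 0 * max (x₂ - K₂) 0) :=
    (MeasureTheory.integral_integral_swap
      (f := fun K₁ K₂ => D22 K₁ K₂ * (max (x₁ - K₁) 0 * max (x₂ - K₂) 0)) I12').symm
  -- 1D spanning expansions
  have E0 : h x₁ x₂ = h x₁ α₂ + D01 x₁ α₂ * (x₂ - α₂)
      + (∫ K₂ in Ioc 0 α₂, D02 x₁ K₂ * max (K₂ - x₂) 0)
      + ∫ K₂ in Ioi α₂, D02 x₁ K₂ * max (x₂ - K₂) 0 :=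
    CMhelp.spanning_one_dim (fun t ht => hD01 x₁ hx₁ t ht) (fun t ht => hD02 x₁ hx₁ t ht)
      (CMhelp.sect2 hc02 hx₁) hα₂ hx₂
  have E1 : h x₁ α₂ = h α₁ α₂ + D10 α₁ α₂ * (x₁ - α₁)
      + (∫ K₁ in Ioc 0 α₁, D20 K₁ α₂ * max (K₁ - x₁) 0)
      + ∫ K₁ in Ioi α₁, D20 K₁ α₂ * max (x₁ - K₁) 0 :=
    CMhelp.spanning_one_dim (fun t ht => hD10 t ht α₂ hα₂) (fun t ht => hD20 t ht α₂ hα₂)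
      (CMhelp.sect1 hc20 hα₂) hα₁ hx₁
  have s1 : ∀ t ∈ Ici (0:ℝ), HasDerivWithinAt (fun u => D01 u α₂) (D11 t α₂) (Ici 0) t :=
    fun t ht => CMhelp.schwarz hD10 hD01 hD11 hc10 hc11 ht hα₂
  have s2 : ∀ t ∈ Ici (0:ℝ), HasDerivWithinAt (fun u => D11 u α₂) (D21 t α₂) (Ici 0) t :=
    fun t ht => CMhelp.schwarz hD20 hD11 hD21 hc20 hc21 ht hα₂
  have E2 : D01 x₁ α₂ = D01 α₁ α₂ + D11 α₁ α₂ * (x₁ - α₁)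
      + (∫ K₁ in Ioc 0 α₁, D21 K₁ α₂ * max (K₁ - x₁) 0)
      + ∫ K₁ in Ioi α₁, D21 K₁ α₂ * max (x₁ - K₁) 0 :=
    CMhelp.spanning_one_dim s1 s2 (CMhelp.sect1 hc21 hα₂) hα₁ hx₁
  have EK : ∀ K₂, 0 ≤ K₂ → D02 x₁ K₂ = D02 α₁ K₂ + D12 α₁ K₂ * (x₁ - α₁)
      + (∫ K₁ in Ioc 0 α₁, D22 K₁ K₂ * max (K₁ - x₁) 0)
      + ∫ K₁ in Ioi α₁, D22 K₁ K₂ * max (x₁ - K₁) 0 :=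
    fun K₂ hK₂ => CMhelp.spanning_one_dim (fun t ht => hD12 t ht K₂ hK₂)
      (fun t ht => hD22 t ht K₂ hK₂) (CMhelp.sect1 hc22 hK₂) hα₁ hx₁
  -- the E2 expansion multiplied by (x₂ - α₂)
  have HE2 : D01 x₁ α₂ * (x₂ - α₂)
      = D01 α₁ α₂ * (x₂ - α₂) + D11 α₁ α₂ * ((x₁ - α₁) * (x₂ - α₂))
      + (∫ K₁ in Ioc 0 α₁, D21 K₁ α₂ * ((x₂ - α₂) * max (K₁ - x₁) 0))
      + ∫ K₁ in Ioi α₁, D21 K₁ α₂ * ((x₂ - α₂) * max (x₁ - K₁) 0) := by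
    have q1 : (∫ K₁ in Ioc 0 α₁, D21 K₁ α₂ * max (K₁ - x₁) 0) * (x₂ - α₂)
        = ∫ K₁ in Ioc 0 α₁, D21 K₁ α₂ * ((x₂ - α₂) * max (K₁ - x₁) 0) := by
      rw [← integral_mul_const]
      exact setIntegral_congr_fun measurableSet_Ioc (fun K _ => by ring)
    have q2 : (∫ K₁ in Ioi α₁, D21 K₁ α₂ * max (x₁ - K₁) 0) * (x₂ - α₂)
        = ∫ K₁ in Ioi α₁, D21 K₁ α₂ * ((x₂ - α₂) * max (x₁ - K₁) 0) := by
      rw [← integral_mul_const]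
      exact setIntegral_congr_fun measurableSet_Ioi (fun K _ => by ring)
    rw [E2, add_mul, add_mul, add_mul, q1, q2]
    ring
  -- pointwise expansion under the first integral
  have hpt1 : ∀ K₂ ∈ Ioc (0:ℝ) α₂, D02 x₁ K₂ * max (K₂ - x₂) 0
      = D02 α₁ K₂ * max (K₂ - x₂) 0
      + D12 α₁ K₂ * ((x₁ - α₁) * max (K₂ - x₂) 0)
      + (∫ K₁ in Ioc 0 α₁, D22 K₁ K₂ * (max (K₁ - x₁) 0 * max (K₂ - x₂) 0))
      + ∫ K₁ in Ioi α₁, D22 K₁ K₂ * (max (x₁ - K₁) 0 * max (K₂ - x₂) 0) := by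
    intro K₂ hK₂
    have m1 : (∫ K₁ in Ioc 0 α₁, D22 K₁ K₂ * max (K₁ - x₁) 0) * max (K₂ - x₂) 0
        = ∫ K₁ in Ioc 0 α₁, D22 K₁ K₂ * (max (K₁ - x₁) 0 * max (K₂ - x₂) 0) := by
      rw [← integral_mul_const]
      exact setIntegral_congr_fun measurableSet_Ioc (fun K _ => by ring)
    have m2 : (∫ K₁ in Ioi α₁, D22 K₁ K₂ * max (x₁ - K₁) 0) * max (K₂ - x₂) 0
        = ∫ K₁ in Ioi α₁, D22 K₁ K₂ * (max (x₁ - K₁) 0 * max (K₂ - x₂) 0) := by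
      rw [← integral_mul_const]
      exact setIntegral_congr_fun measurableSet_Ioi (fun K _ => by ring)
    rw [EK K₂ (le_of_lt hK₂.1), add_mul, add_mul, add_mul, m1, m2]
    ring
  have hpt2 : ∀ K₂ ∈ Ioi α₂, D02 x₁ K₂ * max (x₂ - K₂) 0
      = D02 α₁ K₂ * max (x₂ - K₂) 0
      + D12 α₁ K₂ * ((x₁ - α₁) * max (x₂ - K₂) 0)
      + (∫ K₁ in Ioc 0 α₁, D22 K₁ K₂ * (max (K₁ - x₁) 0 * max (x₂ - K₂) 0))
      + ∫ K₁ in Ioi α₁, D22 K₁ K₂ * (max (x₁ - K₁) 0 * max (x₂ - K₂) 0) := by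
    intro K₂ hK₂
    have hK₂0 : (0:ℝ) ≤ K₂ := le_trans hα₂ (le_of_lt hK₂)
    have m1 : (∫ K₁ in Ioc 0 α₁, D22 K₁ K₂ * max (K₁ - x₁) 0) * max (x₂ - K₂) 0
        = ∫ K₁ in Ioc 0 α₁, D22 K₁ K₂ * (max (K₁ - x₁) 0 * max (x₂ - K₂) 0) := by
      rw [← integral_mul_const]
      exact setIntegral_congr_fun measurableSet_Ioc (fun K _ => by ring)
    have m2 : (∫ K₁ in Ioi α₁, D22 K₁ K₂ * max (x₁ - K₁) 0) * max (x₂ - K₂) 0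
        = ∫ K₁ in Ioi α₁, D22 K₁ K₂ * (max (x₁ - K₁) 0 * max (x₂ - K₂) 0) := by
      rw [← integral_mul_const]
      exact setIntegral_congr_fun measurableSet_Ioi (fun K _ => by ring)
    rw [EK K₂ hK₂0, add_mul, add_mul, add_mul, m1, m2]
    ring
  -- expansions of the two K₂-integrals
  have HJ1 : (∫ K₂ in Ioc 0 α₂, D02 x₁ K₂ * max (K₂ - x₂) 0)
      = (∫ K₂ in Ioc 0 α₂, D02 α₁ K₂ * max (K₂ - x₂) 0)
      + (∫ K₂ in Ioc 0 α₂, D12 α₁ K₂ * ((x₁ - α₁) * max (K₂ - x₂) 0))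
      + (∫ K₁ in Ioc 0 α₁, ∫ K₂ in Ioc 0 α₂,
          D22 K₁ K₂ * (max (K₁ - x₁) 0 * max (K₂ - x₂) 0))
      + ∫ K₁ in Ioi α₁, ∫ K₂ in Ioc 0 α₂,
          D22 K₁ K₂ * (max (x₁ - K₁) 0 * max (K₂ - x₂) 0) := by
    have GA : IntegrableOn (fun K₂ => D02 α₁ K₂ * max (K₂ - x₂) 0
        + D12 α₁ K₂ * ((x₁ - α₁) * max (K₂ - x₂) 0)) (Ioc 0 α₂) := G1.add G3
    have GB : IntegrableOn (fun K₂ => D02 α₁ K₂ * max (K₂ - x₂) 0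
        + D12 α₁ K₂ * ((x₁ - α₁) * max (K₂ - x₂) 0)
        + ∫ K₁ in Ioc 0 α₁, D22 K₁ K₂ * (max (K₁ - x₁) 0 * max (K₂ - x₂) 0)) (Ioc 0 α₂) :=
      GA.add int13
    rw [setIntegral_congr_fun measurableSet_Ioc hpt1,
      integral_add GB int15, integral_add GA int13, integral_add G1 G3, e13, e15]
  have HJ2 : (∫ K₂ in Ioi α₂, D02 x₁ K₂ * max (x₂ - K₂) 0)
      = (∫ K₂ in Ioi α₂, D02 α₁ K₂ * max (x₂ - K₂) 0)
      + (∫ K₂ in Ioi α₂, D12 α₁ K₂ * ((x₁ - α₁) * max (x₂ - K₂) 0))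
      + (∫ K₁ in Ioc 0 α₁, ∫ K₂ in Ioi α₂,
          D22 K₁ K₂ * (max (K₁ - x₁) 0 * max (x₂ - K₂) 0))
      + ∫ K₁ in Ioi α₁, ∫ K₂ in Ioi α₂,
          D22 K₁ K₂ * (max (x₁ - K₁) 0 * max (x₂ - K₂) 0) := by
    have GA : IntegrableOn (fun K₂ => D02 α₁ K₂ * max (x₂ - K₂) 0
        + D12 α₁ K₂ * ((x₁ - α₁) * max (x₂ - K₂) 0)) (Ioi α₂) := G2.add G4
    have GB : IntegrableOn (fun K₂ => D02 α₁ K₂ * max (x₂ - K₂) 0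
        + D12 α₁ K₂ * ((x₁ - α₁) * max (x₂ - K₂) 0)
        + ∫ K₁ in Ioc 0 α₁, D22 K₁ K₂ * (max (K₁ - x₁) 0 * max (x₂ - K₂) 0)) (Ioi α₂) :=
      GA.add int14
    rw [setIntegral_congr_fun measurableSet_Ioi hpt2,
      integral_add GB int16, integral_add GA int14, integral_add G2 G4, e14, e16]
  refine ⟨G1, G2, G3, G4, G5, G6, G7, G8, I9, I10, I11, I12, ?_⟩
  rw [E0, E1, HE2, HJ1, HJ2]
  ring
end

section
/- Let (Ω, ℱ, ℙ) be a probability space, 𝒢 ⊆ ℱ a sub-σ-algebra, (U, 𝒰, μ) a finite measure space, and g : U × Ω → ℝ a (𝒰 ⊗ ℱ)-measurable function with ∫_{U×Ω} |g| d(μ ⊗ ℙ) < ∞. Then there exists a (𝒰 ⊗ 𝒢)-measurable function G : U × Ω → ℝ such that for μ-almost every u, the function G(u, ·) is a version of the conditional expectation E[g(u, ·) | 𝒢], and such that ℙ-almost surely E[∫_U g(u, ·) μ(du) | 𝒢] = ∫_U G(u, ·) μ(du). -/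
open MeasureTheory Filter Set
open scoped ENNReal Topology

namespace CondFubiniAux

variable {Ω : Type*} {m : MeasurableSpace Ω} [mΩ : MeasurableSpace Ω]
  {U : Type*} [mU : MeasurableSpace U]
  {P : Measure Ω} {μ : Measure U}

def CW (m : MeasurableSpace Ω) [mΩ : MeasurableSpace Ω] {U : Type*} [mU : MeasurableSpace U]
    (P : Measure Ω) (μ : Measure U) (f : U × Ω → ℝ) : Prop :=
  ∃ G : U × Ω → ℝ, Measurable[mU.prod m] G ∧
    ∀ᵐ u ∂μ, (fun ω => G (u, ω)) =ᵐ[P] P[(fun ω => f (u, ω))|m]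

lemma prod_le (hm : m ≤ mΩ) :
    (mU.prod m : MeasurableSpace (U × Ω)) ≤ mU.prod mΩ :=
  sup_le_sup le_rfl (MeasurableSpace.comap_mono hm)

lemma contraction (hm : m ≤ mΩ) [IsProbabilityMeasure P] [SFinite μ]
    {f₁ f₂ W₁ W₂ : U × Ω → ℝ}
    (hf₁ : Integrable f₁ (μ.prod P)) (hf₂ : Integrable f₂ (μ.prod P))
    (hW₁ : Measurable[mU.prod m] W₁) (hW₂ : Measurable[mU.prod m] W₂)
    (hs₁ : ∀ᵐ u ∂μ, (fun ω => W₁ (u, ω)) =ᵐ[P] P[(fun ω => f₁ (u, ω))|m])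
    (hs₂ : ∀ᵐ u ∂μ, (fun ω => W₂ (u, ω)) =ᵐ[P] P[(fun ω => f₂ (u, ω))|m]) :
    ∫⁻ z, ‖W₁ z - W₂ z‖₊ ∂(μ.prod P) ≤ ∫⁻ z, ‖f₁ z - f₂ z‖₊ ∂(μ.prod P) := by
  have hW₁' : Measurable W₁ := hW₁.mono (prod_le hm) le_rfl
  have hW₂' : Measurable W₂ := hW₂.mono (prod_le hm) le_rfl
  rw [lintegral_prod (fun z => (‖W₁ z - W₂ z‖₊ : ℝ≥0∞)) ((hW₁'.sub hW₂').nnnorm.coe_nnreal_ennreal).aemeasurable,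
    lintegral_prod (fun z => (‖f₁ z - f₂ z‖₊ : ℝ≥0∞)) ((hf₁.aestronglyMeasurable.aemeasurable.sub
      hf₂.aestronglyMeasurable.aemeasurable).nnnorm.coe_nnreal_ennreal)]
  refine lintegral_mono_ae ?_
  filter_upwards [hs₁, hs₂, hf₁.prod_right_ae, hf₂.prod_right_ae] with u h1 h2 hi1 hi2
  calc ∫⁻ ω, ‖W₁ (u, ω) - W₂ (u, ω)‖₊ ∂P
      = ∫⁻ ω, ‖(P[(fun ω => f₁ (u, ω))|m]) ω - (P[(fun ω => f₂ (u, ω))|m]) ω‖₊ ∂P := by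
        refine lintegral_congr_ae ?_
        filter_upwards [h1, h2] with ω e1 e2
        simp only [e1, e2]
    _ = eLpNorm ((P[(fun ω => f₁ (u, ω))|m]) - (P[(fun ω => f₂ (u, ω))|m])) 1 P := by
        rw [eLpNorm_one_eq_lintegral_enorm]; rfl
    _ = eLpNorm (P[(fun ω => f₁ (u, ω)) - (fun ω => f₂ (u, ω))|m]) 1 P :=
        eLpNorm_congr_ae (condExp_sub hi1 hi2 (m := m)).symm
    _ ≤ eLpNorm ((fun ω => f₁ (u, ω)) - fun ω => f₂ (u, ω)) 1 P :=
        eLpNorm_one_condExp_le_eLpNorm _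
    _ = ∫⁻ ω, ‖f₁ (u, ω) - f₂ (u, ω)‖₊ ∂P := by
        rw [eLpNorm_one_eq_lintegral_enorm]; rfl

lemma CW_of_tendsto (hm : m ≤ mΩ) [IsProbabilityMeasure P] [IsFiniteMeasure μ]
    {f : ℕ → U × Ω → ℝ} {g : U × Ω → ℝ}
    (hfm : ∀ n, Measurable (f n)) (hgm : Measurable g)
    (hfi : ∀ n, Integrable (f n) (μ.prod P)) (hgi : Integrable g (μ.prod P))
    (hCW : ∀ n, CW m P μ (f n))
    (hconv : Tendsto (fun n => eLpNorm (f n - g) 1 (μ.prod P)) atTop (𝓝 0)) :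
    CW m P μ g := by
  -- select a rapidly converging subsequence
  have hsel : ∀ k : ℕ, ∃ n, eLpNorm (f n - g) 1 (μ.prod P) ≤ 2⁻¹ ^ k := by
    intro k
    have hpos : (0 : ℝ≥0∞) < 2⁻¹ ^ k := by
      apply ENNReal.pow_pos; simp
    exact ((hconv.eventually_lt_const hpos).exists).imp fun n hn => hn.le
  choose φ hφ using hsel
  choose W hWm hWsec using fun k => hCW (φ k)
  have hWm' : ∀ k, Measurable (W k) := fun k => (hWm k).mono (prod_le hm) le_rfl
  -- L¹ distance of sections to g, as a function of u
  set B : ℕ → U → ℝ≥0∞ := fun k u => ∫⁻ ω, ‖f (φ k) (u, ω) - g (u, ω)‖₊ ∂P with hB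
  have hBmeas : ∀ k, Measurable (B k) := fun k =>
    Measurable.lintegral_prod_right' (((hfm (φ k)).sub hgm).nnnorm.coe_nnreal_ennreal)
  have hBint : ∀ k, ∫⁻ u, B k u ∂μ ≤ 2⁻¹ ^ k := by
    intro k
    rw [hB]
    have := lintegral_prod (fun z => (‖f (φ k) z - g z‖₊ : ℝ≥0∞)) (((hfm (φ k)).sub hgm).nnnorm.coe_nnreal_ennreal).aemeasurable
      (μ := μ) (ν := P)
    beta_reduce; rw [← this]
    simpa [eLpNorm_one_eq_lintegral_enorm, enorm_eq_nnnorm] using hφ k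
  have hgeo : ∑' k : ℕ, ((2 : ℝ≥0∞))⁻¹ ^ k < ∞ := by
    rw [ENNReal.tsum_geometric]
    simp [ENNReal.sub_half]
  -- a.e. u, the section L¹ distances tend to 0
  have hB0 : ∀ᵐ u ∂μ, Tendsto (fun k => B k u) atTop (𝓝 0) := by
    have hsum : ∫⁻ u, ∑' k, B k u ∂μ < ∞ := by
      rw [lintegral_tsum fun k => (hBmeas k).aemeasurable]
      exact lt_of_le_of_lt (ENNReal.tsum_le_tsum hBint) hgeo
    filter_upwards [ae_lt_top (Measurable.ennreal_tsum hBmeas) hsum.ne] with u hu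
    exact ENNReal.tendsto_atTop_zero_of_tsum_ne_top hu.ne
  -- the witnesses form an a.e. convergent sequence (w.r.t. the trimmed measure)
  have hmp : (mU.prod m : MeasurableSpace (U × Ω)) ≤ mU.prod mΩ := prod_le hm
  have hWd : ∀ k, ∫⁻ z, ‖W (k + 1) z - W k z‖₊ ∂(μ.prod P) ≤ 2⁻¹ ^ (k + 1) + 2⁻¹ ^ k := by
    intro k
    refine (contraction hm (hfi _) (hfi _) (hWm _) (hWm _) (hWsec _) (hWsec _)).trans ?_
    calc ∫⁻ z, ‖f (φ (k + 1)) z - f (φ k) z‖₊ ∂(μ.prod P)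
        ≤ ∫⁻ z, (‖f (φ (k + 1)) z - g z‖₊ + ‖f (φ k) z - g z‖₊ : ℝ≥0∞) ∂(μ.prod P) := by
          refine lintegral_mono fun z => ?_
          rw [← ENNReal.coe_add]
          refine ENNReal.coe_le_coe.2 ?_
          calc ‖f (φ (k + 1)) z - f (φ k) z‖₊
              = ‖(f (φ (k + 1)) z - g z) + (g z - f (φ k) z)‖₊ := by ring_nf
            _ ≤ ‖f (φ (k + 1)) z - g z‖₊ + ‖g z - f (φ k) z‖₊ := nnnorm_add_le _ _
            _ = ‖f (φ (k + 1)) z - g z‖₊ + ‖f (φ k) z - g z‖₊ := by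
                congr 1
                rw [← neg_sub, nnnorm_neg]
      _ = (∫⁻ z, ‖f (φ (k + 1)) z - g z‖₊ ∂(μ.prod P))
            + ∫⁻ z, ‖f (φ k) z - g z‖₊ ∂(μ.prod P) :=
          lintegral_add_left (((hfm _).sub hgm).nnnorm.coe_nnreal_ennreal) _
      _ ≤ 2⁻¹ ^ (k + 1) + 2⁻¹ ^ k := by
          refine add_le_add ?_ ?_ <;>
            simpa [eLpNorm_one_eq_lintegral_enorm, enorm_eq_nnnorm] using hφ _
  have hWsum : ∫⁻ z, ∑' k, (‖W (k + 1) z - W k z‖₊ : ℝ≥0∞) ∂(μ.prod P) < ∞ := by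
    rw [lintegral_tsum (f := fun k z => (‖W (k + 1) z - W k z‖₊ : ℝ≥0∞))
      fun k => (((hWm' (k + 1)).sub (hWm' k)).nnnorm.coe_nnreal_ennreal).aemeasurable]
    refine lt_of_le_of_lt (ENNReal.tsum_le_tsum hWd) ?_
    rw [ENNReal.tsum_add]
    exact ENNReal.add_lt_top.2 ⟨lt_of_le_of_lt (by
      refine ENNReal.tsum_le_tsum fun k => ?_
      exact pow_le_pow_right_of_le_one' (by simp) (Nat.le_succ k)) hgeo, hgeo⟩
  have hsum_meas : Measurable[mU.prod m]
      (fun z => ∑' k, (‖W (k + 1) z - W k z‖₊ : ℝ≥0∞)) := by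
    letI : MeasurableSpace (U × Ω) := mU.prod m
    exact Measurable.ennreal_tsum fun k => ((hWm (k + 1)).sub (hWm k)).nnnorm.coe_nnreal_ennreal
  have htrim : ∀ᵐ z ∂((μ.prod P).trim hmp),
      (∑' k, (‖W (k + 1) z - W k z‖₊ : ℝ≥0∞)) < ∞ := by
    refine ae_lt_top hsum_meas ?_
    rw [lintegral_trim hmp hsum_meas]
    exact hWsum.ne
  have hcauchy : ∀ᵐ z ∂((μ.prod P).trim hmp),
      ∃ l, Tendsto (fun k => W k z) atTop (𝓝 l) := by
    filter_upwards [htrim] with z hz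
    have hsummable : Summable fun k => ‖W (k + 1) z - W k z‖₊ :=
      ENNReal.tsum_coe_ne_top_iff_summable.mp hz.ne
    have hsummable' : Summable fun k => dist (W k z) (W (k + 1) z) := by
      have := NNReal.summable_coe.2 hsummable
      simpa [dist_eq_norm, norm_sub_rev, coe_nnnorm] using this
    exact cauchySeq_tendsto_of_complete (cauchySeq_of_summable_dist hsummable')
  obtain ⟨G, hGm, hGt0⟩ :=
    @measurable_limit_of_tendsto_metrizable_ae (U × Ω) ℝ (mU.prod m) _ _ _ _ ℕ _
      ((μ.prod P).trim hmp) W atTop _ (fun k => ((hWm k).aemeasurable)) hcauchy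
  have hGt : ∀ᵐ z ∂(μ.prod P), Tendsto (fun k => W k z) atTop (𝓝 (G z)) :=
    ae_of_ae_trim hmp hGt0
  refine ⟨G, hGm, ?_⟩
  have hGm' : Measurable G := hGm.mono (prod_le hm) le_rfl
  have h1 : ∀ᵐ u ∂μ, ∀ᵐ ω ∂P, Tendsto (fun k => W k (u, ω)) atTop (𝓝 (G (u, ω))) :=
    Measure.ae_ae_of_ae_prod hGt
  have h2 : ∀ᵐ u ∂μ, ∀ k, (fun ω => W k (u, ω)) =ᵐ[P] P[(fun ω => f (φ k) (u, ω))|m] :=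
    ae_all_iff.2 hWsec
  have h3 : ∀ᵐ u ∂μ, ∀ k, Integrable (fun ω => f (φ k) (u, ω)) P :=
    ae_all_iff.2 fun k => (hfi (φ k)).prod_right_ae
  have h4 : ∀ᵐ u ∂μ, Integrable (fun ω => g (u, ω)) P := hgi.prod_right_ae
  filter_upwards [h1, h2, h3, h4, hB0] with u hu1 hu2 hu3 hu4 hu5
  set c := P[(fun ω => g (u, ω))|m] with hc
  have hcmeas : Measurable c := (stronglyMeasurable_condExp.mono hm).measurable
  have hWsecm : ∀ k, Measurable (fun ω => W k (u, ω)) := fun k =>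
    (hWm' k).comp measurable_prodMk_left
  have hGsecm : Measurable (fun ω => G (u, ω)) := hGm'.comp measurable_prodMk_left
  have hWn : ∀ k, ∫⁻ ω, ‖W k (u, ω) - c ω‖₊ ∂P ≤ B k u := by
    intro k
    calc ∫⁻ ω, ‖W k (u, ω) - c ω‖₊ ∂P
        = ∫⁻ ω, ‖(P[(fun ω => f (φ k) (u, ω))|m]) ω - c ω‖₊ ∂P := by
          refine lintegral_congr_ae ?_
          filter_upwards [hu2 k] with ω e
          simp only [e]
      _ = eLpNorm ((P[(fun ω => f (φ k) (u, ω))|m]) - c) 1 P := by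
          rw [eLpNorm_one_eq_lintegral_enorm]; rfl
      _ = eLpNorm (P[(fun ω => f (φ k) (u, ω)) - (fun ω => g (u, ω))|m]) 1 P :=
          eLpNorm_congr_ae (condExp_sub (hu3 k) hu4 (m := m)).symm
      _ ≤ eLpNorm ((fun ω => f (φ k) (u, ω)) - fun ω => g (u, ω)) 1 P :=
          eLpNorm_one_condExp_le_eLpNorm _
      _ = B k u := by rw [eLpNorm_one_eq_lintegral_enorm]; rfl
  have hzero : ∫⁻ ω, ‖G (u, ω) - c ω‖₊ ∂P = 0 := by
    refine le_antisymm ?_ (by positivity)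
    calc ∫⁻ ω, ‖G (u, ω) - c ω‖₊ ∂P
        = ∫⁻ ω, liminf (fun k => (‖W k (u, ω) - c ω‖₊ : ℝ≥0∞)) atTop ∂P := by
          refine lintegral_congr_ae ?_
          filter_upwards [hu1] with ω hω
          have : Tendsto (fun k => (‖W k (u, ω) - c ω‖₊ : ℝ≥0∞)) atTop
              (𝓝 (‖G (u, ω) - c ω‖₊ : ℝ≥0∞)) :=
            ENNReal.tendsto_coe.2 ((hω.sub tendsto_const_nhds).nnnorm)
          exact this.liminf_eq.symm
      _ ≤ liminf (fun k => ∫⁻ ω, ‖W k (u, ω) - c ω‖₊ ∂P) atTop :=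
          lintegral_liminf_le fun k => ((hWsecm k).sub hcmeas).nnnorm.coe_nnreal_ennreal
      _ ≤ liminf (fun k => B k u) atTop := liminf_le_liminf (Eventually.of_forall hWn)
      _ = 0 := hu5.liminf_eq
  have := (lintegral_eq_zero_iff (hGsecm.sub hcmeas).nnnorm.coe_nnreal_ennreal).mp hzero
  filter_upwards [this] with ω hω
  have : G (u, ω) - c ω = 0 := by
    simpa using hω
  exact sub_eq_zero.mp this


lemma CW_congr [SFinite μ] [IsProbabilityMeasure P] {f g : U × Ω → ℝ} (h : f =ᵐ[μ.prod P] g) (hf : CW m P μ f) :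
    CW m P μ g := by
  obtain ⟨G, hGm, hGs⟩ := hf
  refine ⟨G, hGm, ?_⟩
  have h' : ∀ᵐ u ∂μ, (fun ω => f (u, ω)) =ᵐ[P] fun ω => g (u, ω) :=
    Measure.ae_ae_of_ae_prod h
  filter_upwards [hGs, h'] with u h1 h2
  exact h1.trans (condExp_congr_ae h2)

lemma CW_add [SFinite μ] [IsProbabilityMeasure P] {f g : U × Ω → ℝ}
    (hfi : Integrable f (μ.prod P)) (hgi : Integrable g (μ.prod P))
    (hf : CW m P μ f) (hg : CW m P μ g) : CW m P μ (f + g) := by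
  obtain ⟨F, hFm, hFs⟩ := hf
  obtain ⟨G, hGm, hGs⟩ := hg
  refine ⟨F + G, hFm.add hGm, ?_⟩
  filter_upwards [hFs, hGs, hfi.prod_right_ae, hgi.prod_right_ae] with u h1 h2 hif hig
  have : P[(fun ω => (f + g) (u, ω))|m]
      =ᵐ[P] P[(fun ω => f (u, ω))|m] + P[(fun ω => g (u, ω))|m] := by
    have := condExp_add hif hig (m := m)
    simpa [Pi.add_def] using this
  refine EventuallyEq.trans ?_ this.symm
  filter_upwards [h1, h2] with ω e1 e2
  simp only [Pi.add_apply, e1, e2]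

lemma CW_smul (c : ℝ) {f : U × Ω → ℝ} (hf : CW m P μ f) :
    CW m P μ (fun z => c * f z) := by
  obtain ⟨F, hFm, hFs⟩ := hf
  refine ⟨fun z => c * F z, (measurable_const (a := c)).mul hFm, ?_⟩
  filter_upwards [hFs] with u h1
  have : P[(fun ω => c * f (u, ω))|m] =ᵐ[P] fun ω => c * (P[(fun ω => f (u, ω))|m]) ω := by
    have := condExp_smul (μ := P) (m := m) c (fun ω => f (u, ω))
    simpa [Pi.smul_def, smul_eq_mul] using this
  refine EventuallyEq.trans ?_ this.symm
  filter_upwards [h1] with ω e1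
  simp only [e1]

lemma integrable_indicator_one [IsProbabilityMeasure P] [IsFiniteMeasure μ]
    {S : Set (U × Ω)} (hS : MeasurableSet S) :
    Integrable (S.indicator fun _ => (1 : ℝ)) (μ.prod P) :=
  (integrable_const 1).indicator hS

lemma integrable_indicator_one_section {S : Set (U × Ω)} (hS : MeasurableSet S)
    [IsProbabilityMeasure P] (u : U) :
    Integrable (fun ω => S.indicator (fun _ => (1 : ℝ)) (u, ω)) P := by
  have hmeas : Measurable fun ω => S.indicator (fun _ => (1 : ℝ)) (u, ω) :=
    (measurable_const.indicator hS).comp measurable_prodMk_left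
  refine (integrable_const (1 : ℝ)).mono' hmeas.aestronglyMeasurable
    (Eventually.of_forall fun ω => ?_)
  by_cases h : (u, ω) ∈ S <;> simp [Set.indicator_of_mem, Set.indicator_of_notMem, h]

lemma CW_rect (hm : m ≤ mΩ) [IsProbabilityMeasure P]
    {A : Set U} {B : Set Ω} (hA : MeasurableSet[mU] A) :
    CW m P μ ((A ×ˢ B).indicator fun _ => (1 : ℝ)) := by
  have hsnd : @Measurable (U × Ω) Ω (mU.prod m) m Prod.snd := @measurable_snd U Ω mU m
  have hfst : @Measurable (U × Ω) U (mU.prod m) mU Prod.fst := @measurable_fst U Ω mU m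
  refine ⟨fun z => A.indicator (fun _ => (1 : ℝ)) z.1 *
      (P[B.indicator (fun _ => (1 : ℝ))|m]) z.2, ?_, ?_⟩
  · exact ((measurable_const.indicator hA).comp hfst).mul
      (stronglyMeasurable_condExp.measurable.comp hsnd)
  · refine Eventually.of_forall fun u => ?_
    by_cases hu : u ∈ A
    · have hsec : (fun ω => ((A ×ˢ B).indicator (fun _ => (1 : ℝ))) (u, ω))
          = B.indicator fun _ => (1 : ℝ) := by
        funext ω
        by_cases hω : ω ∈ B <;>
          simp [Set.indicator_apply, Set.mem_prod, hu, hω]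
      rw [hsec]
      simp only [Set.indicator_of_mem hu, one_mul]
      exact EventuallyEq.rfl
    · have hsec : (fun ω => ((A ×ˢ B).indicator (fun _ => (1 : ℝ))) (u, ω))
          = fun _ => (0 : ℝ) := by
        funext ω
        simp [Set.indicator_apply, Set.mem_prod, hu]
      rw [hsec]
      simp only [Set.indicator_of_notMem hu, zero_mul]
      rw [show (fun _ : Ω => (0 : ℝ)) = (0 : Ω → ℝ) from rfl, condExp_zero]

lemma CW_zero : CW m P μ (fun _ => (0 : ℝ)) := by
  refine ⟨fun _ => 0, measurable_const, Eventually.of_forall fun u => ?_⟩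
  rw [show (fun ω : Ω => (0 : ℝ)) = (0 : Ω → ℝ) from rfl, condExp_zero]

lemma CW_compl (hm : m ≤ mΩ) [IsProbabilityMeasure P] [IsFiniteMeasure μ]
    {t : Set (U × Ω)} (ht : MeasurableSet t)
    (h : CW m P μ (t.indicator fun _ => (1 : ℝ))) :
    CW m P μ (tᶜ.indicator fun _ => (1 : ℝ)) := by
  obtain ⟨G, hGm, hGs⟩ := h
  refine ⟨fun z => 1 - G z, measurable_const.sub hGm, ?_⟩
  filter_upwards [hGs] with u h1
  have hsec : (fun ω => tᶜ.indicator (fun _ => (1 : ℝ)) (u, ω))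
      = (fun _ => (1 : ℝ)) - fun ω => t.indicator (fun _ => (1 : ℝ)) (u, ω) := by
    funext ω
    by_cases hω : (u, ω) ∈ t <;> simp [Set.indicator_apply, hω]
  rw [hsec]
  have h2 := condExp_sub (m := m) (μ := P) (integrable_const (1 : ℝ))
    (integrable_indicator_one_section ht u)
  refine EventuallyEq.trans ?_ h2.symm
  have h3 := condExp_const hm (1 : ℝ) (μ := P)
  filter_upwards [h1] with ω e1
  simp [h3, e1]

lemma CW_iUnion (hm : m ≤ mΩ) [IsProbabilityMeasure P] [IsFiniteMeasure μ]
    {F : ℕ → Set (U × Ω)} (hd : Pairwise (Function.onFun Disjoint F))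
    (hFm : ∀ i, MeasurableSet (F i))
    (hC : ∀ i, CW m P μ ((F i).indicator fun _ => (1 : ℝ))) :
    CW m P μ ((⋃ i, F i).indicator fun _ => (1 : ℝ)) := by
  have hacc_meas : ∀ n, MeasurableSet (Set.accumulate F n) := fun n =>
    MeasurableSet.iUnion fun i => MeasurableSet.iUnion fun _ => hFm i
  have hCacc : ∀ n, CW m P μ ((Set.accumulate F n).indicator fun _ => (1 : ℝ)) := by
    intro n
    induction n with
    | zero =>
      have : Set.accumulate F 0 = F 0 := by
        simp [Set.accumulate_def, Nat.le_zero]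
      rw [this]; exact hC 0
    | succ n ih =>
      have hdisj : Disjoint (Set.accumulate F n) (F (n + 1)) := by
        rw [Set.accumulate_def]
        exact Set.disjoint_iUnion₂_left.2 fun i hi =>
          hd (Nat.ne_of_lt (Nat.lt_succ_of_le hi))
      have hstep : Set.accumulate F (n + 1) = Set.accumulate F n ∪ F (n + 1) := by
        ext z
        simp only [Set.mem_accumulate, Set.mem_union]
        constructor
        · rintro ⟨y, hy, hz⟩
          rcases Nat.lt_or_ge y (n + 1) with h | h
          · exact Or.inl ⟨y, Nat.lt_succ_iff.mp h, hz⟩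
          · exact Or.inr (by rwa [Nat.le_antisymm hy h] at hz)
        · rintro (⟨y, hy, hz⟩ | hz)
          · exact ⟨y, le_trans hy (Nat.le_succ n), hz⟩
          · exact ⟨n + 1, le_rfl, hz⟩
      rw [hstep, Set.indicator_union_of_disjoint hdisj]
      exact CW_add (integrable_indicator_one (hacc_meas n))
        (integrable_indicator_one (hFm (n + 1))) ih (hC (n + 1))
  refine CW_of_tendsto hm (fun n => measurable_const.indicator (hacc_meas n))
    (measurable_const.indicator (MeasurableSet.iUnion hFm))
    (fun n => integrable_indicator_one (hacc_meas n))
    (integrable_indicator_one (MeasurableSet.iUnion hFm)) hCacc ?_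
  have hkey : ∀ n, eLpNorm ((Set.accumulate F n).indicator (fun _ => (1 : ℝ))
      - (⋃ i, F i).indicator fun _ => (1 : ℝ)) 1 (μ.prod P)
      = (μ.prod P) ((⋃ i, F i) \ Set.accumulate F n) := by
    intro n
    rw [eLpNorm_one_eq_lintegral_enorm,
      ← lintegral_indicator_one ((MeasurableSet.iUnion hFm).diff (hacc_meas n))]
    refine lintegral_congr fun z => ?_
    by_cases h1 : z ∈ Set.accumulate F n
    · have h2 : z ∈ ⋃ i, F i := Set.accumulate_subset_iUnion n h1
      simp [Set.indicator_apply, Set.mem_diff, h1, h2]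
    · by_cases h2 : z ∈ ⋃ i, F i <;>
        simp [Set.indicator_apply, Set.mem_diff, h1, h2]
  have hsub : ∀ n, (μ.prod P) ((⋃ i, F i) \ Set.accumulate F n)
      = (μ.prod P) (⋃ i, F i) - (μ.prod P) (Set.accumulate F n) := fun n =>
    measure_diff (Set.accumulate_subset_iUnion n) (hacc_meas n).nullMeasurableSet
      (measure_ne_top _ _)
  simp only [hkey, hsub]
  have h1 : Tendsto (fun n => (μ.prod P) (Set.accumulate F n)) atTop
      (𝓝 ((μ.prod P) (⋃ i, F i))) := tendsto_measure_iUnion_accumulate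
  have := ENNReal.Tendsto.sub (tendsto_const_nhds
      (x := (μ.prod P) (⋃ i, F i)) (f := atTop (α := ℕ)))
    h1 (Or.inr (measure_ne_top _ _))
  simpa using this

lemma CW_indicator (hm : m ≤ mΩ) [IsProbabilityMeasure P] [IsFiniteMeasure μ]
    {S : Set (U × Ω)} (hS : MeasurableSet S) :
    CW m P μ (S.indicator fun _ => (1 : ℝ)) := by
  refine MeasurableSpace.induction_on_inter
    (C := fun S _ => CW m P μ (S.indicator fun _ => (1 : ℝ)))
    generateFrom_prod.symm isPiSystem_prod ?_ ?_ ?_ ?_ _ hS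
  · show CW m P μ ((∅ : Set (U × Ω)).indicator fun _ => (1 : ℝ))
    rw [Set.indicator_empty]
    exact CW_zero
  · rintro _ ⟨A, hA, B, hB, rfl⟩
    exact CW_rect hm hA
  · intro t ht h
    exact CW_compl hm ht h
  · intro F hd hFm hC
    exact CW_iUnion hm hd hFm hC

set_option synthInstance.maxHeartbeats 1000000 in
lemma CW_integrable (hm : m ≤ mΩ) [IsProbabilityMeasure P] [IsFiniteMeasure μ]
    {f : U × Ω → ℝ} (hf : Integrable f (μ.prod P)) : CW m P μ f := by
  refine Integrable.induction (P := fun f => CW m P μ f) ?_ ?_ ?_ ?_ hf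
  · intro c s hs _
    have : s.indicator (fun _ => c) = fun z => c * s.indicator (fun _ => (1 : ℝ)) z := by
      funext z; by_cases h : z ∈ s <;> simp [h]
    rw [this]
    exact CW_smul c (CW_indicator hm hs)
  · intro f g _ hfi hgi hf hg
    exact CW_add hfi hgi hf hg
  · refine IsSeqClosed.isClosed ?_
    intro fs F hmem htend
    have hconv := (Lp.tendsto_Lp_iff_tendsto_eLpNorm' fs F).mp htend
    exact CW_of_tendsto hm (fun n => (Lp.stronglyMeasurable (fs n)).measurable)
      (Lp.stronglyMeasurable F).measurable (fun n => L1.integrable_coeFn (fs n))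
      (L1.integrable_coeFn F) hmem hconv
  · intro f g hfg _ hCW
    exact CW_congr hfg hCW

end CondFubiniAux

open CondFubiniAux in
/-- **Conditional Fubini interchange.** Let `𝒢 = m` be a sub-σ-algebra of `ℱ = mΩ`, `μ` a
finite measure on `U`, and `g : U × Ω → ℝ` jointly measurable with
`∫∫ |g| d(μ ⊗ ℙ) < ∞`. Then there is a `(𝒰 ⊗ 𝒢)`-measurable `G` such that for
`μ`-a.e. `u` the section `G(u, ·)` is a version of `E[g(u, ·) | 𝒢]`, and `ℙ`-a.s.
`E[∫ g(u, ·) μ(du) | 𝒢] = ∫ G(u, ·) μ(du)`. -/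
theorem conditional_fubini
    {Ω : Type*} (m : MeasurableSpace Ω) [mΩ : MeasurableSpace Ω] (hm : m ≤ mΩ)
    (P : Measure Ω) [IsProbabilityMeasure P]
    {U : Type*} [mU : MeasurableSpace U] (μ : Measure U) [IsFiniteMeasure μ]
    (g : U × Ω → ℝ) (hmeas : Measurable g)
    (hint : Integrable g (μ.prod P)) :
    ∃ G : U × Ω → ℝ,
      Measurable[mU.prod m] G ∧
      (∀ᵐ u ∂μ, (fun ω => G (u, ω)) =ᵐ[P] P[(fun ω => g (u, ω))|m]) ∧
      P[(fun ω => ∫ u, g (u, ω) ∂μ)|m] =ᵐ[P] fun ω => ∫ u, G (u, ω) ∂μ := by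
  obtain ⟨G, hGm, hGsec⟩ := CW_integrable hm hint
  have hGm' : Measurable G := hGm.mono (prod_le hm) le_rfl
  have hGint : Integrable G (μ.prod P) := by
    refine ⟨hGm'.aestronglyMeasurable, ?_⟩
    have hbound : ∫⁻ z, ‖G z‖₊ ∂(μ.prod P) ≤ ∫⁻ z, ‖g z‖₊ ∂(μ.prod P) := by
      rw [lintegral_prod _ (hGm'.nnnorm.coe_nnreal_ennreal).aemeasurable,
        lintegral_prod _ (hmeas.nnnorm.coe_nnreal_ennreal).aemeasurable]
      refine lintegral_mono_ae ?_
      filter_upwards [hGsec, hint.prod_right_ae] with u h1 h2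
      calc ∫⁻ ω, ‖G (u, ω)‖₊ ∂P
          = ∫⁻ ω, ‖(P[(fun ω => g (u, ω))|m]) ω‖₊ ∂P := by
            refine lintegral_congr_ae ?_
            filter_upwards [h1] with ω e
            simp only [e]
        _ = eLpNorm (P[(fun ω => g (u, ω))|m]) 1 P :=
            by rw [eLpNorm_one_eq_lintegral_enorm]; rfl
        _ ≤ eLpNorm (fun ω => g (u, ω)) 1 P := eLpNorm_one_condExp_le_eLpNorm _
        _ = ∫⁻ ω, ‖g (u, ω)‖₊ ∂P := by rw [eLpNorm_one_eq_lintegral_enorm]; rfl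
    exact lt_of_le_of_lt hbound hint.2
  refine ⟨G, hGm, hGsec, ?_⟩
  haveI : IsFiniteMeasure (P.trim hm) := ⟨by
    rw [trim_measurableSet_eq hm (@MeasurableSet.univ _ m)]
    exact measure_lt_top P _⟩
  have hF1int : Integrable (fun ω => ∫ u, G (u, ω) ∂μ) P := hGint.integral_prod_right
  have hfint : Integrable (fun ω => ∫ u, g (u, ω) ∂μ) P := hint.integral_prod_right
  have hGsm : StronglyMeasurable[mU.prod m] G := by
    letI : MeasurableSpace (U × Ω) := mU.prod m
    exact hGm.stronglyMeasurable
  have hmeasF1 : StronglyMeasurable[m] (fun ω => ∫ u, G (u, ω) ∂μ) :=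
    @StronglyMeasurable.integral_prod_left U Ω ℝ mU m μ _ _ _ (fun u ω => G (u, ω)) hGsm
  refine (ae_eq_condExp_of_forall_setIntegral_eq hm hfint
    (fun s _ _ => hF1int.integrableOn) (fun s hs _ => ?_)
    hmeasF1.aestronglyMeasurable).symm
  have hsΩ : MeasurableSet s := hm s hs
  have hrestr : μ.prod (P.restrict s) = (μ.prod P).restrict (Set.univ ×ˢ s) := by
    rw [← Measure.prod_restrict, Measure.restrict_univ]
  have hGrestrict : Integrable G (μ.prod (P.restrict s)) := by
    rw [hrestr]; exact hGint.restrict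
  have hgrestrict : Integrable g (μ.prod (P.restrict s)) := by
    rw [hrestr]; exact hint.restrict
  calc ∫ ω in s, ∫ u, G (u, ω) ∂μ ∂P
      = ∫ u, ∫ ω in s, G (u, ω) ∂P ∂μ :=
        (integral_integral_swap (f := fun u ω => G (u, ω)) hGrestrict).symm
    _ = ∫ u, ∫ ω in s, g (u, ω) ∂P ∂μ := by
        refine integral_congr_ae ?_
        filter_upwards [hGsec, hint.prod_right_ae] with u h1 h2
        calc ∫ ω in s, G (u, ω) ∂P
            = ∫ ω in s, (P[(fun ω => g (u, ω))|m]) ω ∂P :=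
              setIntegral_congr_ae hsΩ (h1.mono fun ω e _ => e)
          _ = ∫ ω in s, g (u, ω) ∂P := setIntegral_condExp hm h2 hs
    _ = ∫ ω in s, ∫ u, g (u, ω) ∂μ ∂P :=
        integral_integral_swap (f := fun u ω => g (u, ω)) hgrestrict
end

section
/- Let A, B, C, D be real d×d matrices, let ℋ be the 2d×2d block matrix ℋ = [[A, B], [C, D]], and let V be a real d×d matrix. For τ ∈ ℝ write exp(τℋ) in d×d blocks as [[Θ₁₁(τ), Θ₁₂(τ)], [Θ₂₁(τ), Θ₂₂(τ)]], and set P(τ) = Θ₁₁(τ) + Θ₁₂(τ)V and R(τ) = Θ₂₁(τ) + Θ₂₂(τ)V. Suppose P(τ) is invertible for every τ ∈ [0, T]. Then Ψ(τ) := R(τ)·P(τ)⁻¹ satisfies Ψ(0) = V and is differentiable on [0, T] with Ψ'(τ) = C + D·Ψ(τ) − Ψ(τ)·A − Ψ(τ)·B·Ψ(τ) for all τ ∈ [0, T]. -/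
open Matrix NormedSpace

/-- **Linearization of the matrix Riccati equation via a Hamiltonian block matrix.**
Write `exp(τℋ)` for `ℋ = [[A, B], [C, D]]` in `d×d` blocks `Θᵢⱼ(τ)`, and set
`P(τ) = Θ₁₁(τ) + Θ₁₂(τ)V`, `R(τ) = Θ₂₁(τ) + Θ₂₂(τ)V`. If `P(τ)` is invertible for
every `τ ∈ [0, T]`, then `Ψ(τ) = R(τ)P(τ)⁻¹` satisfies `Ψ(0) = V` and the Riccati
equation `Ψ' = C + DΨ − ΨA − ΨBΨ` on `[0, T]` (stated entrywise). -/
theorem riccati_linearization (d : ℕ) (T : ℝ) (hT : 0 ≤ T)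
    (A B C D V : Matrix (Fin d) (Fin d) ℝ)
    (Θ₁₁ Θ₁₂ Θ₂₁ Θ₂₂ : ℝ → Matrix (Fin d) (Fin d) ℝ)
    (hΘ₁₁ : ∀ τ : ℝ, Θ₁₁ τ = (NormedSpace.exp (τ • fromBlocks A B C D)).toBlocks₁₁)
    (hΘ₁₂ : ∀ τ : ℝ, Θ₁₂ τ = (NormedSpace.exp (τ • fromBlocks A B C D)).toBlocks₁₂)
    (hΘ₂₁ : ∀ τ : ℝ, Θ₂₁ τ = (NormedSpace.exp (τ • fromBlocks A B C D)).toBlocks₂₁)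
    (hΘ₂₂ : ∀ τ : ℝ, Θ₂₂ τ = (NormedSpace.exp (τ • fromBlocks A B C D)).toBlocks₂₂)
    (P R : ℝ → Matrix (Fin d) (Fin d) ℝ)
    (hP : ∀ τ : ℝ, P τ = Θ₁₁ τ + Θ₁₂ τ * V)
    (hR : ∀ τ : ℝ, R τ = Θ₂₁ τ + Θ₂₂ τ * V)
    (hPinv : ∀ τ ∈ Set.Icc (0 : ℝ) T, IsUnit (P τ))
    (Ψ : ℝ → Matrix (Fin d) (Fin d) ℝ)
    (hΨ : ∀ τ : ℝ, Ψ τ = R τ * (P τ)⁻¹) :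
    Ψ 0 = V ∧
    ∀ τ ∈ Set.Icc (0 : ℝ) T, ∀ i j,
      HasDerivWithinAt (fun t => Ψ t i j)
        ((C + D * Ψ τ - Ψ τ * A - Ψ τ * B * Ψ τ) i j) (Set.Icc 0 T) τ := by
  have hM0 : NormedSpace.exp ((0:ℝ) • fromBlocks A B C D) = 1 := by
    rw [zero_smul, exp_zero]
  have hP0 : P 0 = 1 := by
    rw [hP, hΘ₁₁, hΘ₁₂, hM0, ← Matrix.fromBlocks_one, Matrix.toBlocks_fromBlocks₁₁,
      Matrix.toBlocks_fromBlocks₁₂, zero_mul, add_zero]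
  have hR0 : R 0 = V := by
    rw [hR, hΘ₂₁, hΘ₂₂, hM0, ← Matrix.fromBlocks_one, Matrix.toBlocks_fromBlocks₂₁,
      Matrix.toBlocks_fromBlocks₂₂, one_mul, zero_add]
  refine ⟨by rw [hΨ, hP0, hR0, inv_one, mul_one], ?_⟩
  intro τ hτ
  letI : NormedRing (Matrix (Fin d) (Fin d) ℝ) := Matrix.linftyOpNormedRing
  letI : NormedAlgebra ℝ (Matrix (Fin d) (Fin d) ℝ) := Matrix.linftyOpNormedAlgebra
  letI : NormedRing (Matrix (Fin d ⊕ Fin d) (Fin d ⊕ Fin d) ℝ) := Matrix.linftyOpNormedRing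
  letI : NormedAlgebra ℝ (Matrix (Fin d ⊕ Fin d) (Fin d ⊕ Fin d) ℝ) :=
    Matrix.linftyOpNormedAlgebra
  set s : Set ℝ := Set.Icc 0 T with hs
  set ℋ : Matrix (Fin d ⊕ Fin d) (Fin d ⊕ Fin d) ℝ := fromBlocks A B C D with hℋ
  set M : ℝ → Matrix (Fin d ⊕ Fin d) (Fin d ⊕ Fin d) ℝ := fun t => NormedSpace.exp (t • ℋ) with hMdef
  have hderivM : HasDerivAt M (ℋ * M τ) τ := hasDerivAt_exp_smul_const' ℋ τ
  -- the two linear "block" maps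
  let LP : Matrix (Fin d ⊕ Fin d) (Fin d ⊕ Fin d) ℝ →ₗ[ℝ] Matrix (Fin d) (Fin d) ℝ :=
    { toFun := fun X => X.toBlocks₁₁ + X.toBlocks₁₂ * V
      map_add' := fun X Y => by
        ext i j
        simp [Matrix.toBlocks₁₁, Matrix.toBlocks₁₂, Matrix.mul_apply, add_mul,
          Finset.sum_add_distrib]
        ring
      map_smul' := fun c X => by
        ext i j
        simp [Matrix.toBlocks₁₁, Matrix.toBlocks₁₂, Matrix.mul_apply, Finset.mul_sum,
          mul_add, mul_assoc] }
  let LR : Matrix (Fin d ⊕ Fin d) (Fin d ⊕ Fin d) ℝ →ₗ[ℝ] Matrix (Fin d) (Fin d) ℝ :=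
    { toFun := fun X => X.toBlocks₂₁ + X.toBlocks₂₂ * V
      map_add' := fun X Y => by
        ext i j
        simp [Matrix.toBlocks₂₁, Matrix.toBlocks₂₂, Matrix.mul_apply, add_mul,
          Finset.sum_add_distrib]
        ring
      map_smul' := fun c X => by
        ext i j
        simp [Matrix.toBlocks₂₁, Matrix.toBlocks₂₂, Matrix.mul_apply, Finset.mul_sum,
          mul_add, mul_assoc] }
  have hMτ : M τ = fromBlocks (Θ₁₁ τ) (Θ₁₂ τ) (Θ₂₁ τ) (Θ₂₂ τ) := by
    rw [hΘ₁₁, hΘ₁₂, hΘ₂₁, hΘ₂₂]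
    exact (Matrix.fromBlocks_toBlocks _).symm
  have hPfun : P = fun t => LP (M t) := by
    funext t
    simp only [LP, LinearMap.coe_mk, AddHom.coe_mk, hP t, hΘ₁₁ t, hΘ₁₂ t, hMdef]
  have hRfun : R = fun t => LR (M t) := by
    funext t
    simp only [LR, LinearMap.coe_mk, AddHom.coe_mk, hR t, hΘ₂₁ t, hΘ₂₂ t, hMdef]
  have hLPval : LP (ℋ * M τ) = A * P τ + B * R τ := by
    rw [hMτ, hℋ, Matrix.fromBlocks_multiply]
    show (A * Θ₁₁ τ + B * Θ₂₁ τ) + (A * Θ₁₂ τ + B * Θ₂₂ τ) * V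
        = A * P τ + B * R τ
    rw [hP, hR]
    noncomm_ring
  have hLRval : LR (ℋ * M τ) = C * P τ + D * R τ := by
    rw [hMτ, hℋ, Matrix.fromBlocks_multiply]
    show (C * Θ₁₁ τ + D * Θ₂₁ τ) + (C * Θ₁₂ τ + D * Θ₂₂ τ) * V
        = C * P τ + D * R τ
    rw [hP, hR]
    noncomm_ring
  have hPd : HasDerivWithinAt P (A * P τ + B * R τ) s τ := by
    have h := (LP.toContinuousLinearMap.hasFDerivAt.comp_hasDerivAt τ hderivM).hasDerivWithinAt
      (s := s)
    simp only [LinearMap.coe_toContinuousLinearMap'] at h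
    replace h := h.congr_deriv hLPval
    exact h.congr (fun t _ => by simp [hPfun, Function.comp]) (by simp [hPfun, Function.comp])
  have hRd : HasDerivWithinAt R (C * P τ + D * R τ) s τ := by
    have h := (LR.toContinuousLinearMap.hasFDerivAt.comp_hasDerivAt τ hderivM).hasDerivWithinAt
      (s := s)
    simp only [LinearMap.coe_toContinuousLinearMap'] at h
    replace h := h.congr_deriv hLRval
    exact h.congr (fun t _ => by simp [hRfun, Function.comp]) (by simp [hRfun, Function.comp])
  have hu : IsUnit (P τ) := hPinv τ hτ
  have hcoe : (↑hu.unit⁻¹ : Matrix (Fin d) (Fin d) ℝ) = (P τ)⁻¹ := by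
    rw [Matrix.nonsing_inv_eq_ringInverse]
    conv_rhs => rw [← hu.unit_spec]
    rw [Ring.inverse_unit]
  have hQd : HasDerivWithinAt (fun t => (P t)⁻¹)
      (-((P τ)⁻¹ * (A * P τ + B * R τ) * (P τ)⁻¹)) s τ := by
    have hfun : (fun t => (P t)⁻¹) = fun t => Ring.inverse (P t) :=
      funext fun t => Matrix.nonsing_inv_eq_ringInverse _
    rw [hfun]
    have hF := hasFDerivAt_ringInverse (𝕜 := ℝ) hu.unit
    rw [hu.unit_spec] at hF
    have := hF.comp_hasDerivWithinAt τ hPd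
    simp [hcoe] at this
    exact this
  have hΨd : HasDerivWithinAt Ψ
      ((C * P τ + D * R τ) * (P τ)⁻¹ +
        R τ * -((P τ)⁻¹ * (A * P τ + B * R τ) * (P τ)⁻¹)) s τ := by
    have hΨfun : Ψ = fun t => R t * (P t)⁻¹ := funext hΨ
    rw [hΨfun]
    exact hRd.mul hQd
  have hPP : P τ * (P τ)⁻¹ = 1 :=
    Matrix.mul_nonsing_inv _ ((Matrix.isUnit_iff_isUnit_det _).mp hu)
  have hval : (C * P τ + D * R τ) * (P τ)⁻¹ +
      R τ * -((P τ)⁻¹ * (A * P τ + B * R τ) * (P τ)⁻¹)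
      = C + D * Ψ τ - Ψ τ * A - Ψ τ * B * Ψ τ := by
    rw [hΨ]
    have expand : (C * P τ + D * R τ) * (P τ)⁻¹ +
        R τ * -((P τ)⁻¹ * (A * P τ + B * R τ) * (P τ)⁻¹)
        = C * (P τ * (P τ)⁻¹) + D * (R τ * (P τ)⁻¹)
          - R τ * (P τ)⁻¹ * A * (P τ * (P τ)⁻¹)
          - R τ * (P τ)⁻¹ * (B * (R τ * (P τ)⁻¹)) := by
      noncomm_ring
    rw [expand, hPP, mul_one, mul_one]
    noncomm_ring
  rw [hval] at hΨd
  intro i j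
  let E : Matrix (Fin d) (Fin d) ℝ →ₗ[ℝ] ℝ :=
    (LinearMap.proj (R := ℝ) (φ := fun _ : Fin d => ℝ) j).comp
      (LinearMap.proj (R := ℝ) (φ := fun _ : Fin d => Fin d → ℝ) i)
  exact E.toContinuousLinearMap.hasFDerivAt.comp_hasDerivWithinAt τ hΨd
end

section
/- Let K > 0 be real and let u₁, u₂ ∈ ℂ with Re(u₂) < 0 and Re(u₁) + Re(u₂) > 1. Then the bilateral Laplace transform of the two-asset spread option payoff converges absolutely and ∫_{ℝ²} e^{−u₁x₁ − u₂x₂}·(e^{x₁} − e^{x₂} − K)⁺ dx₁ dx₂ = K^{1−u₁−u₂} · Γ(u₁ + u₂ − 1) · Γ(−u₂) / Γ(u₁ + 1). -/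
open MeasureTheory Set Complex Filter


lemma cexp_integrableOn_Ioi {b : ℂ} (hb : 0 < b.re) (a : ℝ) :
    IntegrableOn (fun x : ℝ => Complex.exp (-(b * x))) (Ioi a) := by
  refine ((exp_neg_integrableOn_Ioi a hb).mono' ?_ ?_)
  · exact (Complex.continuous_exp.comp (by continuity)).aestronglyMeasurable
  · filter_upwards with x
    simp [Complex.norm_exp]

lemma hasDerivAt_cexp_aux {b : ℂ} (hbne : b ≠ 0) (x : ℝ) :
    HasDerivAt (fun y : ℝ => -Complex.exp (-(b * y)) / b) (Complex.exp (-(b * x))) x := by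
  have h1 : HasDerivAt (fun y : ℝ => -(b * (y:ℂ))) (-b) x := by
    convert ((Complex.ofRealCLM.hasDerivAt (x := x)).const_mul b).neg using 1
    · rfl
    · funext y; simp
    · simp
  have h2 := (h1.cexp.div_const b).neg
  convert h2 using 1
  · rfl
  · funext y; simp only [Pi.neg_apply]; rw [neg_div]
  · rw [mul_neg, neg_div, neg_neg, mul_div_assoc, div_self hbne, mul_one]

lemma tendsto_cexp_aux {b : ℂ} (hb : 0 < b.re) :
    Tendsto (fun x : ℝ => -Complex.exp (-(b * x)) / b) atTop (nhds 0) := by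
  rw [tendsto_zero_iff_norm_tendsto_zero]
  simp only [norm_div, norm_neg, Complex.norm_exp, neg_re, mul_re,
    Complex.ofReal_re, Complex.ofReal_im, mul_zero, sub_zero]
  rw [show (0:ℝ) = 0 / ‖b‖ by simp]
  apply Tendsto.div_const
  apply Real.tendsto_exp_atBot.comp
  have : Tendsto (fun x : ℝ => b.re * x) atTop atTop := Tendsto.const_mul_atTop hb tendsto_id
  exact tendsto_neg_atBot_iff.mpr this

lemma integral_cexp_Ioi {b : ℂ} (hb : 0 < b.re) (a : ℝ) :
    ∫ x in Ioi a, Complex.exp (-(b * x)) = Complex.exp (-(b * a)) / b := by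
  have hbne : b ≠ 0 := fun h => by simp [h] at hb
  have := integral_Ioi_of_hasDerivAt_of_tendsto' (f := fun x : ℝ => -Complex.exp (-(b * x)) / b)
    (f' := fun x : ℝ => Complex.exp (-(b * x))) (a := a) (m := 0)
    (fun x _ => hasDerivAt_cexp_aux hbne x) (cexp_integrableOn_Ioi hb a) (tendsto_cexp_aux hb)
  rw [this]; field_simp; ring

lemma inner_lemma {u : ℂ} (hu : 1 < u.re) {c : ℝ} (hc : 0 < c) :
    Integrable (fun x : ℝ => Complex.exp (-(u * x)) * (max (Real.exp x - c) 0 : ℝ)) ∧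
    ∫ x : ℝ, Complex.exp (-(u * x)) * (max (Real.exp x - c) 0 : ℝ)
      = (c:ℂ) ^ (1 - u) / (u * (u - 1)) := by
  have hu0 : 0 < u.re := lt_trans one_pos hu
  have hu1 : 0 < (u - 1).re := by simp [Complex.sub_re]; linarith
  have hune : u ≠ 0 := fun h => by simp [h] at hu0
  have hu1ne : u - 1 ≠ 0 := fun h => by simp [h] at hu1
  set lc := Real.log c with hlc
  set f : ℝ → ℂ := fun x => Complex.exp (-(u * x)) * (max (Real.exp x - c) 0 : ℝ) with hf
  set g : ℝ → ℂ := fun x => Complex.exp (-((u - 1) * x)) - c * Complex.exp (-(u * x)) with hg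
  have h0 : ∀ x ∉ Ioi lc, f x = 0 := by
    intro x hx
    simp only [mem_Ioi, not_lt] at hx
    have : Real.exp x ≤ c := by
      rw [← Real.exp_log hc]; exact Real.exp_le_exp.mpr hx
    simp [hf, max_eq_right (by linarith : Real.exp x - c ≤ 0)]
  have hfg : ∀ x ∈ Ioi lc, f x = g x := by
    intro x hx
    simp only [mem_Ioi] at hx
    have hcx : c < Real.exp x := by
      rw [← Real.exp_log hc]; exact Real.exp_lt_exp.mpr hx
    have : max (Real.exp x - c) 0 = Real.exp x - c := max_eq_left (by linarith)
    show Complex.exp (-(u * x)) * (max (Real.exp x - c) 0 : ℝ) = g x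
    rw [this, hg, Complex.ofReal_sub, mul_sub,
      show ((Real.exp x : ℝ) : ℂ) = Complex.exp x from Complex.ofReal_exp x,
      ← Complex.exp_add]
    ring_nf
  have hgint : IntegrableOn g (Ioi lc) :=
    (cexp_integrableOn_Ioi hu1 lc).sub ((cexp_integrableOn_Ioi hu0 lc).const_mul c)
  have hfint : IntegrableOn f (Ioi lc) := hgint.congr_fun (fun x hx => (hfg x hx).symm) measurableSet_Ioi
  have hint : Integrable f := by
    have : f = Set.indicator (Ioi lc) f := by
      funext x
      by_cases hx : x ∈ Ioi lc
      · rw [Set.indicator_of_mem hx]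
      · rw [Set.indicator_of_notMem hx, h0 x hx]
    rw [this]
    exact hfint.integrable_indicator measurableSet_Ioi
  refine ⟨hint, ?_⟩
  have heq : ∫ x : ℝ, f x = ∫ x in Ioi lc, f x :=
    (setIntegral_eq_integral_of_forall_compl_eq_zero (fun x hx => h0 x hx)).symm
  rw [heq, setIntegral_congr_fun measurableSet_Ioi hfg]
  rw [hg, integral_sub (cexp_integrableOn_Ioi hu1 lc)
    ((cexp_integrableOn_Ioi hu0 lc).const_mul c), integral_const_mul,
    integral_cexp_Ioi hu1 lc, integral_cexp_Ioi hu0 lc]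
  have hcne : (c:ℂ) ≠ 0 := Complex.ofReal_ne_zero.mpr hc.ne'
  have hlog : (lc : ℂ) = Complex.log c := Complex.ofReal_log hc.le
  have e1 : Complex.exp (-((u - 1) * lc)) = (c:ℂ) ^ (1 - u) := by
    rw [Complex.cpow_def_of_ne_zero hcne, ← hlog]; ring_nf
  have e2' : (c : ℂ) * Complex.exp (-(u * lc)) = (c:ℂ) ^ (1 - u) := by
    rw [Complex.cpow_def_of_ne_zero hcne, ← hlog]
    rw [show (lc:ℂ) * (1 - u) = (lc:ℂ) + -(u * lc) by ring,
      Complex.exp_add, ← Complex.ofReal_exp, Real.exp_log hc]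
  rw [e1, ← mul_div_assoc, e2']
  field_simp
  ring

lemma cpow_pos_eq_exp {p : ℝ} (hp : 0 < p) (s : ℂ) :
    (p:ℂ) ^ s = Complex.exp (s * (Real.log p : ℝ)) := by
  rw [Complex.cpow_def_of_ne_zero (Complex.ofReal_ne_zero.mpr hp.ne'),
    ← Complex.ofReal_log hp.le, mul_comm]

lemma ofReal_pos_eq_exp {p : ℝ} (hp : 0 < p) :
    (p : ℂ) = Complex.exp ((Real.log p : ℝ) : ℂ) := by
  rw [← Complex.ofReal_exp, Real.exp_log hp]

-- the substitution function
lemma spread_pointwise {K : ℝ} (hK : 0 < K) (u v : ℂ) (x : ℝ) :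
    |K * Real.exp x / (Real.exp x + K) ^ 2| •
      ((((Real.exp x / (Real.exp x + K)) : ℝ) : ℂ) ^ (-v - 1) *
        ((1 : ℂ) - ((Real.exp x / (Real.exp x + K)) : ℝ)) ^ (u + v - 2))
    = (K:ℂ) ^ (u + v - 1) *
      (Complex.exp (-(v * x)) * ((Real.exp x + K : ℝ) : ℂ) ^ (1 - u)) := by
  have hE : 0 < Real.exp x := Real.exp_pos x
  have hS : 0 < Real.exp x + K := by linarith
  have hw : 0 < Real.exp x / (Real.exp x + K) := div_pos hE hS
  have h1w : (1:ℝ) - Real.exp x / (Real.exp x + K) = K / (Real.exp x + K) := by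
    field_simp
    ring
  have hd : 0 < K * Real.exp x / (Real.exp x + K) ^ 2 :=
    div_pos (mul_pos hK hE) (pow_pos hS 2)
  have habs : |K * Real.exp x / (Real.exp x + K) ^ 2| = K * Real.exp x / (Real.exp x + K) ^ 2 :=
    abs_of_pos hd
  rw [habs, show ((1 : ℂ) - ((Real.exp x / (Real.exp x + K)) : ℝ))
      = (((K / (Real.exp x + K) : ℝ)) : ℂ) by push_cast [← h1w]; ring]
  rw [Complex.real_smul]
  rw [cpow_pos_eq_exp hw, cpow_pos_eq_exp (div_pos hK hS), cpow_pos_eq_exp hK,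
    cpow_pos_eq_exp hS, ofReal_pos_eq_exp hd,
    show Complex.exp (-(v * x)) = Complex.exp (-(v * x)) from rfl]
  rw [← Complex.exp_add, ← Complex.exp_add, ← Complex.exp_add, ← Complex.exp_add]
  congr 1
  have l1 : Real.log (Real.exp x / (Real.exp x + K)) = x - Real.log (Real.exp x + K) := by
    rw [Real.log_div hE.ne' hS.ne', Real.log_exp]
  have l2 : Real.log (K / (Real.exp x + K)) = Real.log K - Real.log (Real.exp x + K) := by
    rw [Real.log_div hK.ne' hS.ne']
  have l3 : Real.log (K * Real.exp x / (Real.exp x + K) ^ 2)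
      = Real.log K + x - 2 * Real.log (Real.exp x + K) := by
    rw [Real.log_div (mul_pos hK hE).ne' (pow_pos hS 2).ne', Real.log_mul hK.ne' hE.ne',
      Real.log_exp, Real.log_pow]
    push_cast; ring
  rw [l1, l2, l3]
  push_cast
  ring

section subst
variable {K : ℝ}

lemma spread_hasDerivAt (hK : 0 < K) (x : ℝ) :
    HasDerivAt (fun y : ℝ => Real.exp y / (Real.exp y + K))
      (K * Real.exp x / (Real.exp x + K) ^ 2) x := by
  have hS : 0 < Real.exp x + K := by have := Real.exp_pos x; linarith
  have h := (Real.hasDerivAt_exp x).div ((Real.hasDerivAt_exp x).add_const K) hS.ne'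
  convert h using 1
  · rfl
  · rfl
  · rfl
  ring

lemma spread_injOn (hK : 0 < K) :
    InjOn (fun y : ℝ => Real.exp y / (Real.exp y + K)) univ := by
  intro a _ b _ hab
  simp only at hab
  have ha : 0 < Real.exp a + K := by have := Real.exp_pos a; linarith
  have hb : 0 < Real.exp b + K := by have := Real.exp_pos b; linarith
  rw [div_eq_div_iff ha.ne' hb.ne'] at hab
  have h2 : Real.exp a * K = Real.exp b * K := by ring_nf at hab ⊢; linarith
  have h3 : Real.exp a = Real.exp b := mul_right_cancel₀ hK.ne' h2
  exact Real.exp_injective h3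

lemma spread_image (hK : 0 < K) :
    (fun y : ℝ => Real.exp y / (Real.exp y + K)) '' univ = Ioo 0 1 := by
  rw [image_univ]
  ext w
  simp only [mem_range, mem_Ioo]
  constructor
  · rintro ⟨x, rfl⟩
    have hE : 0 < Real.exp x := Real.exp_pos x
    have hS : 0 < Real.exp x + K := by linarith
    exact ⟨div_pos hE hS, (div_lt_one hS).mpr (by linarith)⟩
  · rintro ⟨hw0, hw1⟩
    refine ⟨Real.log (K * w / (1 - w)), ?_⟩
    have h1w : 0 < 1 - w := by linarith
    have hp : 0 < K * w / (1 - w) := div_pos (mul_pos hK hw0) h1w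
    rw [Real.exp_log hp]
    rw [div_eq_iff (by positivity : K * w / (1 - w) + K ≠ 0)]
    field_simp
    ring

end subst

lemma outer_lemma {u v : ℂ} (hv : v.re < 0) (huv : 1 < u.re + v.re) {K : ℝ} (hK : 0 < K) :
    Integrable (fun x : ℝ => Complex.exp (-(v * x)) * ((Real.exp x + K : ℝ) : ℂ) ^ (1 - u)) ∧
    ∫ x : ℝ, Complex.exp (-(v * x)) * ((Real.exp x + K : ℝ) : ℂ) ^ (1 - u)
      = (K:ℂ) ^ (1 - u - v) * Complex.Gamma (u + v - 1) * Complex.Gamma (-v)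
          / Complex.Gamma (u - 1) := by
  set T : ℝ → ℂ := fun x => Complex.exp (-(v * x)) * ((Real.exp x + K : ℝ) : ℂ) ^ (1 - u) with hT
  set g : ℝ → ℂ := fun w => ((w : ℝ) : ℂ) ^ (-v - 1) * ((1 : ℂ) - ((w : ℝ) : ℂ)) ^ (u + v - 2)
    with hgdef
  set f : ℝ → ℝ := fun y => Real.exp y / (Real.exp y + K) with hfdef
  set f' : ℝ → ℝ := fun x => K * Real.exp x / (Real.exp x + K) ^ 2 with hf'def
  have hderiv : ∀ x ∈ (univ : Set ℝ), HasDerivWithinAt f (f' x) univ x :=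
    fun x _ => (spread_hasDerivAt hK x).hasDerivWithinAt
  have hKne : (K : ℂ) ≠ 0 := Complex.ofReal_ne_zero.mpr hK.ne'
  have hKpne : (K:ℂ) ^ (u + v - 1) ≠ 0 := by
    rw [Complex.cpow_def_of_ne_zero hKne]; exact Complex.exp_ne_zero _
  have hpt : ∀ x : ℝ, |f' x| • g (f x) = (K:ℂ) ^ (u + v - 1) * T x :=
    fun x => spread_pointwise hK u v x
  -- Beta side
  have h1 : 0 < (-v).re := by simp; linarith
  have h2 : 0 < (u + v - 1).re := by simp [Complex.add_re, Complex.sub_re]; linarith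
  have hbc := Complex.betaIntegral_convergent h1 h2
  simp only [show -v - 1 = -v - 1 from rfl, show u + v - 1 - 1 = u + v - 2 by ring] at hbc
  have hbIoo : IntegrableOn g (Ioo (0:ℝ) 1) := by
    rw [intervalIntegrable_iff_integrableOn_Ioc_of_le zero_le_one] at hbc
    exact hbc.mono_set Ioo_subset_Ioc_self
  have hbval : ∫ w in Ioo (0:ℝ) 1, g w = Complex.betaIntegral (-v) (u + v - 1) := by
    rw [Complex.betaIntegral, intervalIntegral.integral_of_le zero_le_one,
      integral_Ioc_eq_integral_Ioo]
    simp only [show u + v - 1 - 1 = u + v - 2 by ring]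
    rfl
  -- change of variables
  have hiff := integrableOn_image_iff_integrableOn_abs_deriv_smul MeasurableSet.univ
    hderiv (spread_injOn hK) g
  rw [spread_image hK] at hiff
  have hint' : IntegrableOn (fun x => |f' x| • g (f x)) univ := hiff.mp hbIoo
  rw [integrableOn_univ] at hint'
  have hintKT : Integrable (fun x => (K:ℂ) ^ (u + v - 1) * T x) := by
    exact hint'.congr (Filter.Eventually.of_forall hpt)
  have hintT : Integrable T := by
    have := hintKT.const_mul (((K:ℂ) ^ (u + v - 1))⁻¹)
    refine this.congr (Filter.Eventually.of_forall fun x => ?_)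
    field_simp
  have hcv := integral_image_eq_integral_abs_deriv_smul MeasurableSet.univ
    hderiv (spread_injOn hK) g
  rw [spread_image hK, setIntegral_univ] at hcv
  have hval : Complex.betaIntegral (-v) (u + v - 1) = (K:ℂ) ^ (u + v - 1) * ∫ x, T x := by
    rw [← hbval, hcv]
    simp_rw [hpt]
    rw [integral_const_mul]
  -- Gamma identities
  have hGamma : Complex.Gamma (-v) * Complex.Gamma (u + v - 1)
      = Complex.Gamma (u - 1) * Complex.betaIntegral (-v) (u + v - 1) := by
    have := Complex.Gamma_mul_Gamma_eq_betaIntegral h1 h2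
    rwa [show -v + (u + v - 1) = u - 1 by ring] at this
  have hGne : Complex.Gamma (u - 1) ≠ 0 := by
    apply Complex.Gamma_ne_zero_of_re_pos
    simp [Complex.sub_re]; linarith
  have hKinv : (K:ℂ) ^ (1 - u - v) * (K:ℂ) ^ (u + v - 1) = 1 := by
    rw [← Complex.cpow_add _ _ hKne, show 1 - u - v + (u + v - 1) = 0 by ring, Complex.cpow_zero]
  refine ⟨hintT, ?_⟩
  have : ∫ x, T x = (K:ℂ) ^ (1 - u - v) * Complex.betaIntegral (-v) (u + v - 1) := by
    rw [hval, ← mul_assoc, hKinv, one_mul]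
  rw [this]
  rw [show Complex.betaIntegral (-v) (u + v - 1)
      = Complex.Gamma (-v) * Complex.Gamma (u + v - 1) / Complex.Gamma (u - 1) by
    rw [hGamma]; field_simp]
  ring

lemma inner_real {w : ℝ} (hw : 1 < w) {c : ℝ} (hc : 0 < c) :
    Integrable (fun x : ℝ => Real.exp (-(w * x)) * max (Real.exp x - c) 0) ∧
    ∫ x : ℝ, Real.exp (-(w * x)) * max (Real.exp x - c) 0 = c ^ (1 - w) / (w * (w - 1)) := by
  have hu : 1 < ((w : ℂ)).re := by simpa using hw
  obtain ⟨hi, hv⟩ := inner_lemma hu hc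
  have heq : ∀ x : ℝ, Complex.exp (-((w:ℂ) * x)) * (max (Real.exp x - c) 0 : ℝ)
      = ((Real.exp (-(w * x)) * max (Real.exp x - c) 0 : ℝ) : ℂ) := by
    intro x
    push_cast
    ring
  constructor
  · have := hi.congr (Filter.Eventually.of_forall heq)
    have h2 := this.re
    refine h2.congr (Filter.Eventually.of_forall fun x => ?_)
    exact Complex.ofReal_re _
  · have : ∫ x : ℝ, ((Real.exp (-(w * x)) * max (Real.exp x - c) 0 : ℝ) : ℂ)
        = (c:ℂ) ^ (1 - (w:ℂ)) / ((w:ℂ) * ((w:ℂ) - 1)) := by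
      rw [← hv]; exact integral_congr_ae (Filter.Eventually.of_forall fun x => (heq x).symm)
    rw [show (∫ x : ℝ, ((Real.exp (-(w * x)) * max (Real.exp x - c) 0 : ℝ) : ℂ))
        = ((∫ x : ℝ, Real.exp (-(w * x)) * max (Real.exp x - c) 0 : ℝ) : ℂ) from
      integral_ofReal] at this
    have hrhs : ((c ^ (1 - w) / (w * (w - 1)) : ℝ) : ℂ)
        = (c:ℂ) ^ (1 - (w:ℂ)) / ((w:ℂ) * ((w:ℂ) - 1)) := by
      push_cast [Complex.ofReal_cpow hc.le]
      norm_num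
    exact_mod_cast this.trans hrhs.symm

lemma outer_real_integrable {ur vr : ℝ} (hv : vr < 0) (huv : 1 < ur + vr) {K : ℝ} (hK : 0 < K) :
    Integrable (fun x : ℝ => Real.exp (-(vr * x)) * (Real.exp x + K) ^ (1 - ur)) := by
  have hv' : ((vr:ℂ)).re < 0 := by simpa using hv
  have huv' : 1 < ((ur:ℂ)).re + ((vr:ℂ)).re := by simpa using huv
  have h := (outer_lemma hv' huv' hK).1.norm
  refine h.congr (Filter.Eventually.of_forall fun x => ?_)
  have hS : 0 < Real.exp x + K := by have := Real.exp_pos x; linarith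
  simp only [norm_mul, Complex.norm_exp,
    Complex.norm_cpow_eq_rpow_re_of_pos hS]
  norm_num

/-- **Bilateral Laplace transform of the two-asset spread option payoff.** For `K > 0`
and `u₁, u₂ ∈ ℂ` with `Re(u₂) < 0` and `Re(u₁) + Re(u₂) > 1`, the transform converges
absolutely and
`∫_{ℝ²} e^{−u₁x₁−u₂x₂} (e^{x₁} − e^{x₂} − K)⁺ dx = K^{1−u₁−u₂} Γ(u₁+u₂−1) Γ(−u₂) / Γ(u₁+1)`. -/
theorem laplace_transform_spread (K : ℝ) (hK : 0 < K) (u₁ u₂ : ℂ)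
    (h₂ : u₂.re < 0) (h₁₂ : 1 < u₁.re + u₂.re) :
    Integrable (fun x : ℝ × ℝ =>
      Complex.exp (-(u₁ * x.1 + u₂ * x.2)) * (max (Real.exp x.1 - Real.exp x.2 - K) 0 : ℝ)) ∧
    ∫ x : ℝ × ℝ,
        Complex.exp (-(u₁ * x.1 + u₂ * x.2)) * (max (Real.exp x.1 - Real.exp x.2 - K) 0 : ℝ)
      = (K : ℂ) ^ (1 - u₁ - u₂) * Complex.Gamma (u₁ + u₂ - 1) * Complex.Gamma (-u₂)
          / Complex.Gamma (u₁ + 1) := by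
  have hu₁ : 1 < u₁.re := by linarith
  set F : ℝ × ℝ → ℂ := fun x =>
    Complex.exp (-(u₁ * x.1 + u₂ * x.2)) * (max (Real.exp x.1 - Real.exp x.2 - K) 0 : ℝ) with hF
  have hc : ∀ y : ℝ, 0 < Real.exp y + K := fun y => by have := Real.exp_pos y; linarith
  have hfac : ∀ x y : ℝ, F (x, y) = Complex.exp (-(u₂ * y)) *
      (Complex.exp (-(u₁ * x)) * (max (Real.exp x - (Real.exp y + K)) 0 : ℝ)) := by
    intro x y
    rw [hF]
    simp only
    rw [show Real.exp x - Real.exp y - K = Real.exp x - (Real.exp y + K) by ring,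
      ← mul_assoc, ← Complex.exp_add]
    ring_nf
  have hcont : Continuous F := by
    apply Continuous.mul
    · exact Complex.continuous_exp.comp (by continuity)
    · exact Complex.continuous_ofReal.comp
        ((((Real.continuous_exp.comp continuous_fst).sub
          (Real.continuous_exp.comp continuous_snd)).sub continuous_const).max
          continuous_const)
  have hnorm : ∀ y x : ℝ, ‖F (x, y)‖ = Real.exp (-(u₂.re * y)) *
      (Real.exp (-(u₁.re * x)) * max (Real.exp x - (Real.exp y + K)) 0) := by
    intro y x
    rw [hfac x y]
    simp only [norm_mul, Complex.norm_exp, Complex.norm_real, Real.norm_eq_abs,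
      Complex.neg_re, Complex.mul_re, Complex.ofReal_re, Complex.ofReal_im, mul_zero, sub_zero]
    rw [_root_.abs_of_nonneg (le_max_right (Real.exp x - (Real.exp y + K)) (0:ℝ))]
  have hslice : ∀ y : ℝ, Integrable (fun x => F (x, y)) := by
    intro y
    refine (((inner_lemma hu₁ (hc y)).1.const_mul (Complex.exp (-(u₂ * y)))).congr
      (Filter.Eventually.of_forall fun x => ?_))
    exact (hfac x y).symm
  have hslicenorm : ∀ y : ℝ, ∫ x : ℝ, ‖F (x, y)‖ = Real.exp (-(u₂.re * y)) *
      ((Real.exp y + K) ^ (1 - u₁.re) / (u₁.re * (u₁.re - 1))) := by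
    intro y
    simp_rw [hnorm y]
    rw [integral_const_mul, (inner_real hu₁ (hc y)).2]
  have hint : Integrable F := by
    rw [Measure.volume_eq_prod, integrable_prod_iff' (by rw [← Measure.volume_eq_prod]; exact hcont.aestronglyMeasurable)]
    constructor
    · exact Filter.Eventually.of_forall hslice
    · refine ((outer_real_integrable h₂ h₁₂ hK).mul_const
        ((u₁.re * (u₁.re - 1))⁻¹)).congr (Filter.Eventually.of_forall fun y => ?_)
      show _ = ∫ x : ℝ, ‖F (x, y)‖
      rw [hslicenorm y]
      ring
  refine ⟨hint, ?_⟩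
  have hu1ne : u₁ ≠ 0 := fun h => by simp [h] at hu₁; linarith
  have hu11ne : u₁ - 1 ≠ 0 := by
    intro h
    rw [sub_eq_zero] at h
    rw [h] at hu₁
    simp at hu₁
  have hswap : ∫ z : ℝ × ℝ, F z = ∫ y : ℝ, ∫ x : ℝ, F (x, y) := by
    rw [Measure.volume_eq_prod] at hint ⊢
    exact integral_prod_symm F hint
  rw [hswap]
  have hinner : ∀ y : ℝ, ∫ x : ℝ, F (x, y) = Complex.exp (-(u₂ * y)) *
      ((Real.exp y + K : ℝ) : ℂ) ^ (1 - u₁) / (u₁ * (u₁ - 1)) := by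
    intro y
    simp_rw [hfac _ y]
    rw [integral_const_mul, (inner_lemma hu₁ (hc y)).2]
    ring
  simp_rw [hinner]
  rw [show (fun y : ℝ => Complex.exp (-(u₂ * y)) * ((Real.exp y + K : ℝ) : ℂ) ^ (1 - u₁)
      / (u₁ * (u₁ - 1)))
    = (fun y : ℝ => (Complex.exp (-(u₂ * y)) * ((Real.exp y + K : ℝ) : ℂ) ^ (1 - u₁))
      * (u₁ * (u₁ - 1))⁻¹) from funext fun y => by ring]
  rw [integral_mul_const, (outer_lemma h₂ h₁₂ hK).2]
  have hG1 : Complex.Gamma (u₁ + 1) = u₁ * (u₁ - 1) * Complex.Gamma (u₁ - 1) := by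
    rw [Complex.Gamma_add_one u₁ hu1ne,
      show u₁ = (u₁ - 1) + 1 by ring, Complex.Gamma_add_one _ hu11ne]
    ring_nf
  have hGne : Complex.Gamma (u₁ - 1) ≠ 0 := by
    apply Complex.Gamma_ne_zero_of_re_pos
    simp [Complex.sub_re]; linarith
  rw [hG1]
  field_simp
end

section
/- Let M ≥ 1, K > 0 real, and u₁, …, u_M ∈ ℂ with Re(u_m) > 0 for every m and Σ_{m=1}^M Re(u_m) > 1. Then the bilateral Laplace transform of the worst-of call payoff converges absolutely and ∫_{ℝ^M} e^{−Σ_m u_m x_m}·(min_{1≤m≤M} e^{x_m} − K)⁺ dx = K^{1−Σ_m u_m} / ( (Σ_m u_m − 1)·∏_{m=1}^M u_m ). -/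
open MeasureTheory Set Filter Topology

lemma norm_cexp_neg_mul (c : ℂ) (t : ℝ) : ‖Complex.exp (-c * t)‖ = Real.exp (-c.re * t) := by
  rw [Complex.norm_exp]
  congr 1
  simp [Complex.mul_re]

lemma cexp_neg_integrableOn (c : ℂ) (hc : 0 < c.re) (a : ℝ) :
    IntegrableOn (fun t : ℝ => Complex.exp (-c * t)) (Set.Ioi a) := by
  have h1 : AEStronglyMeasurable (fun t : ℝ => Complex.exp (-c * t))
      (volume.restrict (Set.Ioi a)) :=
    (Complex.continuous_exp.comp (continuous_const.mul Complex.continuous_ofReal)).aestronglyMeasurable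
  refine (exp_neg_integrableOn_Ioi a hc).mono' h1 (ae_of_all _ fun t => ?_)
  rw [norm_cexp_neg_mul]

lemma integral_cexp_neg_Ioi (c : ℂ) (hc : 0 < c.re) (a : ℝ) :
    ∫ t in Set.Ioi a, Complex.exp (-c * t) = Complex.exp (-c * a) / c := by
  have hc0 : c ≠ 0 := fun h => by simp [h] at hc
  have hderiv : ∀ x ∈ Set.Ici a, HasDerivAt (fun t : ℝ => -(Complex.exp (-c * t) / c))
      (Complex.exp (-c * x)) x := by
    intro x _
    have h1 : HasDerivAt (fun z : ℂ => Complex.exp (-c * z)) (-c * Complex.exp (-c * x)) x := by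
      simpa [mul_comm] using ((hasDerivAt_id (x:ℂ)).const_mul (-c)).cexp
    have h3 : HasDerivAt (fun t : ℝ => -(Complex.exp (-c * t) / c)) _ x :=
      ((h1.comp_ofReal).div_const c).neg
    convert h3 using 1
    field_simp
  have htend : Tendsto (fun t : ℝ => -(Complex.exp (-c * t) / c)) atTop (𝓝 0) := by
    rw [tendsto_zero_iff_norm_tendsto_zero]
    have h0 : Tendsto (fun t : ℝ => Real.exp (-(c.re * t)) / ‖c‖) atTop (𝓝 (0 / ‖c‖)) :=
      (Real.tendsto_exp_neg_atTop_nhds_zero.comp (Tendsto.const_mul_atTop hc tendsto_id)).div_const _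
    rw [zero_div] at h0
    refine h0.congr fun t => ?_
    rw [norm_neg, norm_div, norm_cexp_neg_mul, neg_mul]
  have := integral_Ioi_of_hasDerivAt_of_tendsto' hderiv (cexp_neg_integrableOn c hc a) htend
  rw [this]
  ring

lemma integral_rexp_neg_Ioi (b : ℝ) (hb : 0 < b) (a : ℝ) :
    ∫ t in Set.Ioi a, Real.exp (-b * t) = Real.exp (-b * a) / b := by
  have hderiv : ∀ x ∈ Set.Ici a, HasDerivAt (fun t : ℝ => -(Real.exp (-b * t) / b))
      (Real.exp (-b * x)) x := by
    intro x _
    have h1 : HasDerivAt (fun t : ℝ => Real.exp (-b * t)) (-b * Real.exp (-b * x)) x := by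
      simpa [mul_comm] using ((hasDerivAt_id x).const_mul (-b)).exp
    have h3 : HasDerivAt (fun t : ℝ => -(Real.exp (-b * t) / b)) _ x := (h1.div_const b).neg
    convert h3 using 1
    field_simp
  have htend : Tendsto (fun t : ℝ => -(Real.exp (-b * t) / b)) atTop (𝓝 0) := by
    have h0 : Tendsto (fun t : ℝ => Real.exp (-(b * t)) / b) atTop (𝓝 (0 / b)) :=
      (Real.tendsto_exp_neg_atTop_nhds_zero.comp (Tendsto.const_mul_atTop hb tendsto_id)).div_const _
    rw [zero_div] at h0
    simpa [neg_mul] using h0.neg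
  have := integral_Ioi_of_hasDerivAt_of_tendsto' hderiv (exp_neg_integrableOn_Ioi a hb) htend
  rw [this]
  ring

/-- **Bilateral Laplace transform of the worst-of call payoff.** For `K > 0` and
`u ∈ ℂ^M` with `Re(u_m) > 0` for all `m` and `Σ_m Re(u_m) > 1`, the transform
converges absolutely and
`∫_{ℝ^M} e^{−Σ u_m x_m} (min_m e^{x_m} − K)⁺ dx = K^{1−Σu} / ((Σu − 1) ∏ u_m)`. -/
theorem laplace_transform_worst_of_call (M : ℕ) (hM : 1 ≤ M)
    (K : ℝ) (hK : 0 < K) (u : Fin M → ℂ)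
    (hre : ∀ m, 0 < (u m).re) (hsum : 1 < ∑ m, (u m).re) :
    Integrable (fun x : Fin M → ℝ =>
      Complex.exp (-∑ m, u m * x m) * (max ((⨅ m, Real.exp (x m)) - K) 0 : ℝ)) ∧
    ∫ x : Fin M → ℝ,
        Complex.exp (-∑ m, u m * x m) * (max ((⨅ m, Real.exp (x m)) - K) 0 : ℝ)
      = (K : ℂ) ^ (1 - ∑ m, u m) / ((∑ m, u m - 1) * ∏ m, u m) := by
  classical
  have hne : Nonempty (Fin M) := ⟨⟨0, hM⟩⟩
  set F : (Fin M → ℝ) × ℝ → ℂ := fun p =>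
    ∏ m, Set.indicator (Set.Ioi (Real.log p.2)) (fun t => Complex.exp (-(u m) * t)) (p.1 m)
    with hFdef
  set ν : Measure ℝ := volume.restrict (Set.Ioi K) with hν
  -- measurability
  have hFmeas : Measurable F := by
    apply Finset.measurable_prod
    intro m _
    have heq : (fun p : (Fin M → ℝ) × ℝ =>
        Set.indicator (Set.Ioi (Real.log p.2)) (fun t => Complex.exp (-(u m) * t)) (p.1 m))
        = fun p => if Real.log p.2 < p.1 m then Complex.exp (-(u m) * p.1 m) else 0 := by
      funext p; simp [Set.indicator_apply]
    rw [heq]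
    have hs : MeasurableSet {p : (Fin M → ℝ) × ℝ | Real.log p.2 < p.1 m} :=
      measurableSet_lt (Real.measurable_log.comp measurable_snd)
        ((measurable_pi_apply m).comp measurable_fst)
    exact Measurable.ite hs
      (Complex.measurable_exp.comp (((Complex.measurable_ofReal.comp
        ((measurable_pi_apply m).comp measurable_fst))).const_mul _)) measurable_const
  -- norm of F
  have hnormF : ∀ p : (Fin M → ℝ) × ℝ, ‖F p‖ =
      ∏ m, Set.indicator (Set.Ioi (Real.log p.2)) (fun t => Real.exp (-(u m).re * t)) (p.1 m) := by
    intro p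
    rw [hFdef]
    simp only
    rw [norm_prod]
    refine Finset.prod_congr rfl fun m _ => ?_
    rw [norm_indicator_eq_indicator_norm]
    simp only [norm_cexp_neg_mul]
  -- integrability in x for each y
  have hint_x : ∀ y : ℝ, Integrable (fun x : Fin M → ℝ => F (x, y)) := by
    intro y
    exact Integrable.fintype_prod
      (f := fun m => Set.indicator (Set.Ioi (Real.log y)) (fun t => Complex.exp (-(u m) * t)))
      fun m => (integrable_indicator_iff measurableSet_Ioi).2 (cexp_neg_integrableOn (u m) (hre m) _)
  -- value of the x-integral of the norm
  have hnorm_int : ∀ y : ℝ, (∫ x : Fin M → ℝ, ‖F (x, y)‖)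
      = ∏ m, Real.exp (-(u m).re * Real.log y) / (u m).re := by
    intro y
    simp only [hnormF]
    rw [MeasureTheory.integral_fintype_prod_volume_eq_prod (ι := Fin M)
      (f := fun m t => Set.indicator (Set.Ioi (Real.log y)) (fun t => Real.exp (-(u m).re * t)) t)]
    refine Finset.prod_congr rfl fun m _ => ?_
    rw [integral_indicator measurableSet_Ioi, integral_rexp_neg_Ioi _ (hre m)]
  -- integrability of the norm marginal in y
  have h2 : Integrable (fun y => ∫ x : Fin M → ℝ, ‖F (x, y)‖) ν := by
    have hrp : IntegrableOn (fun y : ℝ => y ^ (-(∑ m, (u m).re)) / ∏ m, (u m).re)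
        (Set.Ioi K) :=
      (integrableOn_Ioi_rpow_of_lt (by linarith) hK).div_const _
    refine hrp.congr_fun (fun y hy => ?_) measurableSet_Ioi
    have hy0 : (0:ℝ) < y := hK.trans hy
    rw [hnorm_int y, Finset.prod_div_distrib, ← Real.exp_sum]
    beta_reduce
    congr 1
    rw [Real.rpow_def_of_pos hy0]
    congr 1
    rw [← Finset.sum_neg_distrib, Finset.mul_sum]
    exact Finset.sum_congr rfl fun m _ => by ring
  -- Fubini
  have hFint : Integrable F ((volume : Measure (Fin M → ℝ)).prod ν) := by
    rw [integrable_prod_iff' hFmeas.aestronglyMeasurable]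
    exact ⟨ae_of_all _ fun y => hint_x y, h2⟩
  -- the y-integral gives the payoff
  have hpayoff : ∀ x : Fin M → ℝ, (∫ y, F (x, y) ∂ν) =
      Complex.exp (-∑ m, u m * x m) * ((max ((⨅ m, Real.exp (x m)) - K) 0 : ℝ) : ℂ) := by
    intro x
    obtain ⟨m₀, -, hm₀⟩ := Finset.exists_min_image Finset.univ (fun m => Real.exp (x m))
      Finset.univ_nonempty
    set b := ⨅ m, Real.exp (x m) with hb
    have hbeq : b = Real.exp (x m₀) :=
      le_antisymm (ciInf_le (Set.finite_range _).bddBelow m₀)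
        (le_ciInf fun m => hm₀ m (Finset.mem_univ m))
    have hEq : Set.EqOn (fun y => F (x, y))
        (fun y => Complex.exp (-∑ m, u m * x m)
          * Set.indicator (Set.Iio b) (fun _ => (1:ℂ)) y) (Set.Ioi K) := by
      intro y hy
      have hy0 : (0:ℝ) < y := hK.trans hy
      simp only [hFdef]
      by_cases hall : ∀ m, Real.log y < x m
      · have h1 : ∀ m ∈ Finset.univ, Set.indicator (Set.Ioi (Real.log y))
            (fun t : ℝ => Complex.exp (-(u m) * t)) (x m) = Complex.exp (-(u m) * x m) :=
          fun m _ => Set.indicator_of_mem (hall m) _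
        have h2 : y < b := by
          rw [hbeq]; exact (Real.log_lt_iff_lt_exp hy0).1 (hall m₀)
        rw [Finset.prod_congr rfl h1, ← Complex.exp_sum]
        rw [Set.indicator_of_mem (Set.mem_Iio.2 h2), mul_one]
        congr 1
        rw [← Finset.sum_neg_distrib]
        exact Finset.sum_congr rfl fun m _ => by ring
      · push_neg at hall
        obtain ⟨m, hm⟩ := hall
        have hz : Set.indicator (Set.Ioi (Real.log y))
            (fun t : ℝ => Complex.exp (-(u m) * t)) (x m) = 0 :=
          Set.indicator_of_notMem (by simpa using not_lt.2 hm) _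
        rw [Finset.prod_eq_zero (Finset.mem_univ m) hz]
        have hble : b ≤ y := by
          rw [hbeq]
          calc Real.exp (x m₀) ≤ Real.exp (x m) := hm₀ m (Finset.mem_univ m)
            _ ≤ y := by
              rw [← Real.exp_log hy0]
              exact Real.exp_le_exp.2 hm
        rw [Set.indicator_of_notMem (by simpa using not_lt.2 hble) _, mul_zero]
    calc (∫ y, F (x, y) ∂ν)
        = ∫ y in Set.Ioi K, Complex.exp (-∑ m, u m * x m)
            * Set.indicator (Set.Iio b) (fun _ => (1:ℂ)) y :=
          setIntegral_congr_fun measurableSet_Ioi hEq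
      _ = Complex.exp (-∑ m, u m * x m)
            * ∫ y in Set.Ioi K, Set.indicator (Set.Iio b) (fun _ => (1:ℂ)) y :=
          integral_const_mul _ _
      _ = Complex.exp (-∑ m, u m * x m) * ((max (b - K) 0 : ℝ) : ℂ) := by
          rw [setIntegral_indicator measurableSet_Iio, Set.Ioi_inter_Iio,
            setIntegral_const, Real.volume_real_Ioo, Complex.real_smul,
            mul_one]
  -- integrability conclusion
  have hmargint := hFint.integral_prod_left
  have hInt : Integrable (fun x : Fin M → ℝ =>
      Complex.exp (-∑ m, u m * x m) * (max ((⨅ m, Real.exp (x m)) - K) 0 : ℝ)) :=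
    hmargint.congr (ae_of_all _ fun x => hpayoff x)
  refine ⟨hInt, ?_⟩
  -- value of the inner x-integral
  have hs0 : ∀ m, u m ≠ 0 := fun m h => by
    have := hre m; rw [h] at this; simp at this
  have hP : (∏ m, u m) ≠ 0 := Finset.prod_ne_zero_iff.2 fun m _ => hs0 m
  have hsre : 1 < (∑ m, u m).re := by rw [Complex.re_sum]; exact hsum
  have hinner : Set.EqOn (fun y : ℝ => ∫ x : Fin M → ℝ, F (x, y))
      (fun y : ℝ => ((y:ℂ) ^ (-(∑ m, u m))) / ∏ m, u m) (Set.Ioi K) := by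
    intro y hy
    have hy0 : (0:ℝ) < y := hK.trans hy
    simp only [hFdef]
    rw [MeasureTheory.integral_fintype_prod_volume_eq_prod (ι := Fin M)
      (f := fun m t => Set.indicator (Set.Ioi (Real.log y)) (fun t => Complex.exp (-(u m) * t)) t)]
    have : ∀ m ∈ Finset.univ, (∫ t : ℝ, Set.indicator (Set.Ioi (Real.log y))
        (fun t : ℝ => Complex.exp (-(u m) * t)) t) = Complex.exp (-(u m) * Real.log y) / u m := by
      intro m _
      rw [integral_indicator measurableSet_Ioi, integral_cexp_neg_Ioi _ (hre m)]
    rw [Finset.prod_congr rfl this, Finset.prod_div_distrib, ← Complex.exp_sum]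
    congr 1
    rw [Complex.cpow_def_of_ne_zero (by exact_mod_cast hy0.ne'), ← Complex.ofReal_log hy0.le]
    congr 1
    rw [← Finset.sum_neg_distrib, Finset.mul_sum]
    exact Finset.sum_congr rfl fun m _ => by ring
  calc ∫ x : Fin M → ℝ,
        Complex.exp (-∑ m, u m * x m) * ((max ((⨅ m, Real.exp (x m)) - K) 0 : ℝ) : ℂ)
      = ∫ x : Fin M → ℝ, ∫ y, F (x, y) ∂ν :=
        integral_congr_ae (ae_of_all _ fun x => (hpayoff x).symm)
    _ = ∫ z, F z ∂((volume : Measure (Fin M → ℝ)).prod ν) := (integral_prod F hFint).symm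
    _ = ∫ y, (∫ x : Fin M → ℝ, F (x, y)) ∂ν := integral_prod_symm F hFint
    _ = ∫ y in Set.Ioi K, ((y:ℂ) ^ (-(∑ m, u m))) / ∏ m, u m :=
        setIntegral_congr_fun measurableSet_Ioi hinner
    _ = (∫ y in Set.Ioi K, (y:ℂ) ^ (-(∑ m, u m))) / ∏ m, u m := integral_div _ _
    _ = (-(K:ℂ) ^ (-(∑ m, u m) + 1) / (-(∑ m, u m) + 1)) / ∏ m, u m := by
        rw [integral_Ioi_cpow_of_lt (by simp only [Complex.neg_re]; linarith) hK]
    _ = (K : ℂ) ^ (1 - ∑ m, u m) / ((∑ m, u m - 1) * ∏ m, u m) := by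
        rw [neg_add_eq_sub, div_div, neg_div,
          show ((∑ m, u m) - 1) * ∏ m, u m = -((1 - ∑ m, u m) * ∏ m, u m) by ring,
          div_neg]
end

section
/- Let M ≥ 1, K > 0 real, and u₁, …, u_M ∈ ℂ with Re(u_m) < 0 for every m. Then the bilateral Laplace transform of the put-on-the-sum payoff converges absolutely and ∫_{ℝ^M} e^{−Σ_m u_m x_m}·(K − Σ_{m=1}^M e^{x_m})⁺ dx = K^{1−Σ_m u_m} · ∏_{m=1}^M Γ(−u_m) / Γ(2 − Σ_{m=1}^M u_m). -/
open MeasureTheory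

open Set Complex


lemma meas_cpow_ofReal {α} [MeasurableSpace α] {b : α → ℝ} (hb : Measurable b) {s : ℂ}
    (hs : s ≠ 0) : Measurable (fun x => ((b x : ℂ)) ^ s) := by
  have h : (fun x => ((b x : ℂ)) ^ s)
      = fun x => if (b x : ℂ) = 0 then 0 else Complex.exp (s * Complex.log (b x)) := by
    funext x
    split_ifs with h
    · rw [h, Complex.zero_cpow hs]
    · rw [Complex.cpow_def_of_ne_zero h, mul_comm]
  rw [h]
  refine Measurable.ite (measurableSet_eq_fun (Complex.measurable_ofReal.comp hb)
    measurable_const) measurable_const ?_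
  exact Complex.measurable_exp.comp
    (measurable_const.mul (Complex.measurable_log.comp (Complex.measurable_ofReal.comp hb)))

lemma norm_cpow_ofReal_nonneg {b : ℝ} (hb : 0 ≤ b) {s : ℂ} (hs : 0 < s.re) :
    ‖((b : ℂ)) ^ s‖ = b ^ s.re := by
  rcases eq_or_lt_of_le hb with h | h
  · have hs0 : s ≠ 0 := fun h0 => by simp [h0] at hs
    rw [← h, Complex.ofReal_zero, Complex.zero_cpow hs0, Real.zero_rpow hs.ne', norm_zero]
  · rw [Complex.norm_cpow_eq_rpow_re_of_pos h]
open MeasureTheory Set Complex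

theorem put_oneD (K : ℝ) (hK : 0 < K) (u s : ℂ) (hu : u.re < 0) (hs : 0 < s.re) :
    Integrable (fun t : ℝ => Complex.exp (-(u * t)) * ((max (K - Real.exp t) 0 : ℝ) : ℂ) ^ s) ∧
    ∫ t : ℝ, Complex.exp (-(u * t)) * ((max (K - Real.exp t) 0 : ℝ) : ℂ) ^ s
      = (K : ℂ) ^ (s - u) * (Complex.Gamma (-u) * Complex.Gamma (s + 1))
          / Complex.Gamma (s + 1 - u) := by
  have hs0 : s ≠ 0 := fun h0 => by simp [h0] at hs
  set f : ℝ → ℂ := fun t => Complex.exp (-(u * t)) * ((max (K - Real.exp t) 0 : ℝ) : ℂ) ^ s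
    with hf
  set g : ℝ → ℂ := fun y => (y : ℂ) ^ (-u - 1) * ((max (K - y) 0 : ℝ) : ℂ) ^ s with hg
  have hder : ∀ x ∈ (univ : Set ℝ), HasDerivWithinAt Real.exp (Real.exp x) univ x :=
    fun x _ => (Real.hasDerivAt_exp x).hasDerivWithinAt
  have hinj : InjOn Real.exp univ := Real.exp_injective.injOn
  have himg : Real.exp '' univ = Ioi 0 := by rw [image_univ, Real.range_exp]
  have key : ∀ x : ℝ, |Real.exp x| • g (Real.exp x) = f x := by
    intro x
    have hne : Complex.exp x ≠ 0 := Complex.exp_ne_zero _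
    have h1 : ((Real.exp x : ℝ) : ℂ) = Complex.exp x := Complex.ofReal_exp x
    have h2 : (Complex.exp x) ^ (-u : ℂ) = Complex.exp (-(u * x)) := by
      rw [Complex.cpow_def_of_ne_zero hne, Complex.log_exp (by simp [Real.pi_pos])
        (by simp [Real.pi_pos.le])]
      ring_nf
    have h3 : (Real.exp x : ℝ) • ((Real.exp x : ℝ) : ℂ) ^ (-u - 1)
        = (Complex.exp x) ^ (-u : ℂ) := by
      rw [real_smul, h1]
      nth_rewrite 1 [← Complex.cpow_one (Complex.exp x)]
      rw [← Complex.cpow_add _ _ hne]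
      norm_num
    rw [abs_of_pos (Real.exp_pos x)]
    simp only [hg, hf, smul_eq_mul]
    rw [← h2, ← h3]
    push_cast [real_smul]
    ring
  have hiff : IntegrableOn g (Ioi 0) ↔ Integrable f := by
    rw [← himg, integrableOn_image_iff_integrableOn_abs_deriv_smul MeasurableSet.univ hder hinj g,
      ← integrableOn_univ]
    exact integrableOn_congr_fun (fun x _ => key x) MeasurableSet.univ
  have hval : ∫ y in Ioi 0, g y = ∫ x, f x := by
    rw [← himg, integral_image_eq_integral_abs_deriv_smul MeasurableSet.univ hder hinj g,
      setIntegral_univ]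
    exact integral_congr_ae (Filter.Eventually.of_forall key)
  have hg0 : ∀ y ∈ Ioi K, g y = 0 := by
    intro y hy
    have h1 : max (K - y) 0 = 0 := max_eq_right (by linarith [mem_Ioi.mp hy])
    simp [hg, h1, Complex.zero_cpow hs0]
  -- integrability on Ioc 0 K via scaling
  have hmu : 0 < (-u).re := by rw [neg_re]; linarith
  have hs1 : 0 < (s + 1).re := by rw [add_re, one_re]; linarith
  have hbeta : IntervalIntegrable (fun t : ℝ => (t : ℂ) ^ (-u - 1) * (1 - (t : ℂ)) ^ s)
      volume 0 1 := by
    have h := Complex.betaIntegral_convergent hmu hs1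
    simpa using h
  have hIoc1 : IntegrableOn (fun t : ℝ => (t : ℂ) ^ (-u - 1) * (1 - (t : ℂ)) ^ s) (Ioc 0 1) :=
    (intervalIntegrable_iff_integrableOn_Ioc_of_le zero_le_one).mp hbeta
  have hderK : ∀ x ∈ Ioc (0 : ℝ) 1, HasDerivWithinAt (fun t : ℝ => K * t) K (Ioc 0 1) x := by
    intro x _
    simpa using ((hasDerivAt_id x).const_mul K).hasDerivWithinAt
  have hinjK : InjOn (fun t : ℝ => K * t) (Ioc 0 1) :=
    fun a _ b _ h => mul_left_cancel₀ hK.ne' h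
  have himgK : (fun t : ℝ => K * t) '' Ioc 0 1 = Ioc 0 K := by
    ext y
    constructor
    · rintro ⟨t, ⟨ht0, ht1⟩, rfl⟩
      simp only [mem_Ioc]
      refine ⟨by positivity, ?_⟩
      calc K * t ≤ K * 1 := mul_le_mul_of_nonneg_left ht1 hK.le
        _ = K := mul_one K
    · rintro ⟨hy0, hyK⟩
      exact ⟨y / K, ⟨by positivity, by rw [div_le_one hK]; exact hyK⟩,
        by field_simp⟩
  have hscale : ∀ t ∈ Ioc (0 : ℝ) 1, |K| • g (K * t)
      = ((K : ℂ) * ((K : ℂ) ^ (-u - 1) * (K : ℂ) ^ s))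
          * ((t : ℂ) ^ (-u - 1) * (1 - (t : ℂ)) ^ s) := by
    intro t ⟨ht0, ht1⟩
    have h1t : (0 : ℝ) ≤ 1 - t := by linarith
    have hmax : max (K - K * t) 0 = K * (1 - t) := by
      rw [max_eq_left (by nlinarith)]; ring
    have e1 : ((K * t : ℝ) : ℂ) ^ (-u - 1) = (K : ℂ) ^ (-u - 1) * (t : ℂ) ^ (-u - 1) := by
      rw [Complex.ofReal_mul]
      exact mul_cpow_ofReal_nonneg hK.le ht0.le _
    have e2 : ((K * (1 - t) : ℝ) : ℂ) ^ s = (K : ℂ) ^ s * ((1 : ℂ) - (t : ℂ)) ^ s := by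
      rw [Complex.ofReal_mul]
      have := mul_cpow_ofReal_nonneg hK.le h1t s
      rw [this]
      norm_num
    simp only [hg, hmax, e1, e2, real_smul, abs_of_pos hK]
    push_cast
    ring
  have hIocK : IntegrableOn g (Ioc 0 K) := by
    rw [← himgK, integrableOn_image_iff_integrableOn_abs_deriv_smul measurableSet_Ioc hderK
      hinjK g]
    exact IntegrableOn.congr_fun (hIoc1.const_mul _) (fun t ht => (hscale t ht).symm)
      measurableSet_Ioc
  have hIoiK : IntegrableOn g (Ioi K) :=
    (integrableOn_zero ).congr_fun (fun y hy => (hg0 y hy).symm) measurableSet_Ioi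
  have hgInt : IntegrableOn g (Ioi 0) := by
    rw [← Ioc_union_Ioi_eq_Ioi hK.le]
    exact hIocK.union hIoiK
  have hfInt : Integrable f := hiff.mp hgInt
  refine ⟨hfInt, ?_⟩
  have hGne : Complex.Gamma (-u + (s + 1)) ≠ 0 :=
    Complex.Gamma_ne_zero_of_re_pos (by rw [add_re, neg_re, add_re, one_re]; linarith)
  have hBeta := Complex.Gamma_mul_Gamma_eq_betaIntegral hmu hs1
  have hBval : Complex.betaIntegral (-u) (s + 1)
      = Complex.Gamma (-u) * Complex.Gamma (s + 1) / Complex.Gamma (-u + (s + 1)) := by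
    field_simp [hGne]
    rw [hBeta]
    ring
  have h2nd : ∫ y in Ioi K, g y = 0 := by
    rw [setIntegral_congr_fun measurableSet_Ioi hg0]
    simp
  have h1st : ∫ y in Ioc 0 K, g y
      = (K : ℂ) ^ (-u + (s + 1) - 1) * Complex.betaIntegral (-u) (s + 1) := by
    rw [← intervalIntegral.integral_of_le hK.le, ← Complex.betaIntegral_scaled (-u) (s + 1) hK]
    apply intervalIntegral.integral_congr
    intro y hy
    rw [uIcc_of_le hK.le] at hy
    obtain ⟨hy0, hyK⟩ := hy
    have hmax : max (K - y) 0 = K - y := max_eq_left (by linarith)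
    have hexp : -u - 1 = -u - 1 := rfl
    simp only [hg, hmax]
    have : s = s + 1 - 1 := by ring
    push_cast
    rw [← this]
  rw [← hval, ← Ioc_union_Ioi_eq_Ioi hK.le,
    setIntegral_union (Ioc_disjoint_Ioi le_rfl) measurableSet_Ioi hIocK hIoiK,
    h1st, h2nd, add_zero, hBval]
  have e1 : -u + (s + 1) - 1 = s - u := by ring
  have e2 : -u + (s + 1) = s + 1 - u := by ring
  rw [e1, e2]
  ring
open MeasureTheory Set Complex

noncomputable def putF {M : ℕ} (K : ℝ) (u : Fin M → ℂ) (s : ℂ) (x : Fin M → ℝ) : ℂ :=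
  Complex.exp (-∑ m, u m * x m) * ((max (K - ∑ m, Real.exp (x m)) 0 : ℝ) : ℂ) ^ s

lemma putF_meas {M : ℕ} (K : ℝ) (u : Fin M → ℂ) {s : ℂ} (hs : s ≠ 0) :
    Measurable (putF K u s) := by
  apply Measurable.mul
  · exact (Complex.measurable_exp.comp
      ((Finset.univ.measurable_sum (fun m _ =>
        (Complex.measurable_ofReal.comp (measurable_pi_apply m)).const_mul (u m))).neg))
  · exact meas_cpow_ofReal (((measurable_const.sub
      (Finset.univ.measurable_sum (fun m _ =>
        Real.measurable_exp.comp (measurable_pi_apply m)))).max measurable_const)) hs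

lemma putF_norm {M : ℕ} (K : ℝ) (u : Fin M → ℂ) {s : ℂ} (hs : 0 < s.re) (x : Fin M → ℝ) :
    ((‖putF K u s x‖ : ℝ) : ℂ) = putF K (fun m => ((u m).re : ℂ)) ((s.re : ℂ)) x := by
  unfold putF
  have h1 : ‖Complex.exp (-∑ m, u m * (x m : ℂ))‖ = Real.exp (-∑ m, (u m).re * x m) := by
    rw [Complex.norm_exp]
    congr 1
    simp [Complex.mul_re]
  rw [norm_mul, h1, norm_cpow_ofReal_nonneg (le_max_right _ _) hs, Complex.ofReal_mul,
    Complex.ofReal_cpow (le_max_right _ _), Complex.ofReal_exp]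
  congr 2
  push_cast
  ring
lemma put_inner (c : ℝ) (u0 s : ℂ) (hu : u0.re < 0) (hs : 0 < s.re) :
    Integrable (fun t : ℝ => Complex.exp (-(u0 * t)) * ((max (c - Real.exp t) 0 : ℝ) : ℂ) ^ s) ∧
    ∫ t : ℝ, Complex.exp (-(u0 * t)) * ((max (c - Real.exp t) 0 : ℝ) : ℂ) ^ s
      = ((max c 0 : ℝ) : ℂ) ^ (s - u0) * (Complex.Gamma (-u0) * Complex.Gamma (s + 1))
          / Complex.Gamma (s + 1 - u0) := by
  by_cases hc : 0 < c
  · have h := put_oneD c hc u0 s hu hs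
    rw [max_eq_left hc.le]
    exact h
  · push_neg at hc
    have hs0 : s ≠ 0 := by intro h0; rw [h0] at hs; simp at hs
    have hzero : ∀ t : ℝ, Complex.exp (-(u0 * t)) * ((max (c - Real.exp t) 0 : ℝ) : ℂ) ^ s = 0 := by
      intro t
      have h1 : max (c - Real.exp t) 0 = 0 :=
        max_eq_right (by linarith [Real.exp_pos t])
      rw [h1, Complex.ofReal_zero, Complex.zero_cpow hs0, mul_zero]
    constructor
    · exact (integrable_zero _ _ _).congr (Filter.Eventually.of_forall fun t => (hzero t).symm)
    · rw [integral_congr_ae (Filter.Eventually.of_forall hzero), integral_zero]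
      rw [max_eq_right hc, Complex.ofReal_zero,
        Complex.zero_cpow (fun h0 => by
          have : (s - u0).re = 0 := by rw [h0]; simp
          rw [sub_re] at this
          linarith), zero_mul, zero_div]

lemma putF_insertNth {M : ℕ} (K : ℝ) (u : Fin (M + 1) → ℂ) (s : ℂ) (t : ℝ) (y : Fin M → ℝ) :
    putF K u s (Fin.insertNth 0 t y)
      = Complex.exp (-∑ j, u (Fin.succAbove 0 j) * (y j : ℂ))
        * (Complex.exp (-(u 0 * t))
          * ((max ((K - ∑ j, Real.exp (y j)) - Real.exp t) 0 : ℝ) : ℂ) ^ s) := by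
  unfold putF
  simp only [Fin.sum_univ_succAbove _ (0 : Fin (M + 1)), Fin.insertNth_apply_same,
    Fin.insertNth_apply_succAbove]
  rw [neg_add, Complex.exp_add]
  have h : K - (Real.exp t + ∑ j, Real.exp (y j))
      = (K - ∑ j, Real.exp (y j)) - Real.exp t := by ring
  rw [h]
  ring

lemma put_step {M : ℕ} (K : ℝ) (u : Fin (M + 1) → ℂ) (hre : ∀ m, (u m).re < 0) (s : ℂ)
    (hs : 0 < s.re) (y : Fin M → ℝ) :
    Integrable (fun t : ℝ => putF K u s (Fin.insertNth 0 t y)) ∧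
    ∫ t : ℝ, putF K u s (Fin.insertNth 0 t y)
      = (Complex.Gamma (-u 0) * Complex.Gamma (s + 1) / Complex.Gamma (s + 1 - u 0))
        * putF K (fun j => u (Fin.succAbove 0 j)) (s - u 0) y := by
  constructor
  · simp_rw [putF_insertNth]
    exact ((put_inner _ (u 0) s (hre 0) hs).1.const_mul _)
  · simp_rw [putF_insertNth, integral_const_mul, (put_inner _ (u 0) s (hre 0) hs).2]
    unfold putF
    ring
theorem putF_rec (K : ℝ) (hK : 0 < K) :
    ∀ (M : ℕ) (u : Fin M → ℂ), (∀ m, (u m).re < 0) → ∀ s : ℂ, 0 < s.re →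
    Integrable (putF K u s) ∧
    ∫ x : Fin M → ℝ, putF K u s x
      = (K : ℂ) ^ (s - ∑ m, u m) * Complex.Gamma (s + 1) * (∏ m, Complex.Gamma (-u m))
          / Complex.Gamma (s + 1 - ∑ m, u m) := by
  intro M
  induction M with
  | zero =>
    intro u hre s hs
    have hvol : (volume : Measure (Fin 0 → ℝ)) univ = 1 := by
      rw [volume_pi, Measure.pi_univ]; simp
    haveI : IsFiniteMeasure (volume : Measure (Fin 0 → ℝ)) :=
      ⟨by rw [hvol]; exact ENNReal.one_lt_top⟩
    have hfun : putF (M := 0) K u s = fun _ => (K : ℂ) ^ s := by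
      funext x
      unfold putF
      simp [max_eq_left hK.le]
    have hG : Complex.Gamma (s + 1) ≠ 0 :=
      Complex.Gamma_ne_zero_of_re_pos (by rw [add_re, one_re]; linarith)
    constructor
    · rw [hfun]; exact integrable_const _
    · rw [hfun, integral_const, measureReal_def, hvol]
      have h0 : (∑ m : Fin 0, u m) = 0 := by simp
      have h1 : (∏ m : Fin 0, Complex.Gamma (-u m)) = 1 := by simp
      rw [h0, h1]
      simp only [sub_zero, mul_one, ENNReal.toReal_one, one_smul]
      rw [mul_div_assoc, div_self hG, mul_one]
  | succ M ih =>
    intro u hre s hs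
    set u' : Fin M → ℂ := fun j => u (Fin.succAbove 0 j) with hu'
    have hre' : ∀ j, (u' j).re < 0 := fun j => hre _
    have hs' : 0 < (s - u 0).re := by
      rw [sub_re]; have := hre 0; linarith
    set e := MeasurableEquiv.piFinSuccAbove (fun _ : Fin (M + 1) => ℝ) 0 with he
    have hpres : MeasurePreserving e volume volume :=
      volume_preserving_piFinSuccAbove (fun _ : Fin (M + 1) => ℝ) 0
    set G : ℝ × (Fin M → ℝ) → ℂ := fun p => putF K u s (e.symm p) with hGdef
    have hGpair : ∀ (t : ℝ) (y : Fin M → ℝ), G (t, y) = putF K u s (Fin.insertNth 0 t y) := by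
      intro t y
      have hsymm : e.symm (t, y) = Fin.insertNth 0 t y := by
        rw [he, MeasurableEquiv.piFinSuccAbove_symm_apply]; rfl
      rw [hGdef]
      exact congrArg (putF K u s) hsymm
    have hs0 : s ≠ 0 := by intro h0; rw [h0] at hs; simp at hs
    have hGmeas : AEStronglyMeasurable G ((volume : Measure ℝ).prod volume) :=
      ((putF_meas K u hs0).comp e.symm.measurable).aestronglyMeasurable
    -- inner integral facts
    have hstep := fun y => put_step K u hre s hs y
    -- norm / real-parameter versions
    set σ : Fin (M + 1) → ℂ := fun m => ((u m).re : ℂ) with hσ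
    set τ : ℂ := (s.re : ℂ) with hτ
    have hreσ : ∀ m, (σ m).re < 0 := fun m => by
      simpa [hσ] using hre m
    have hτre : 0 < τ.re := by simpa [hτ] using hs
    have hstepσ := fun y => put_step K σ hreσ τ hτre y
    have hnorm : ∀ x : Fin (M + 1) → ℝ, ((‖putF K u s x‖ : ℝ) : ℂ) = putF K σ τ x :=
      putF_norm K u hs
    set c0 : ℂ := Complex.Gamma (-u 0) * Complex.Gamma (s + 1) / Complex.Gamma (s + 1 - u 0)
      with hc0
    set c0σ : ℂ := Complex.Gamma (-σ 0) * Complex.Gamma (τ + 1) / Complex.Gamma (τ + 1 - σ 0)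
      with hc0σ
    -- norm inner integral
    have hnormint : ∀ y : Fin M → ℝ,
        (∫ t : ℝ, ‖G (t, y)‖) = (c0σ * putF K (fun j => σ (Fin.succAbove 0 j)) (τ - σ 0) y).re := by
      intro y
      have h1 : (((∫ t : ℝ, ‖G (t, y)‖ : ℝ)) : ℂ)
          = ∫ t : ℝ, putF K σ τ (Fin.insertNth 0 t y) :=
        calc (((∫ t : ℝ, ‖G (t, y)‖ : ℝ)) : ℂ)
            = ∫ t : ℝ, ((‖G (t, y)‖ : ℝ) : ℂ) := (integral_ofReal (𝕜 := ℂ)).symm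
          _ = ∫ t : ℝ, putF K σ τ (Fin.insertNth 0 t y) := by
              refine integral_congr_ae (Filter.Eventually.of_forall fun t => ?_)
              dsimp only
              rw [hGpair t y]
              exact hnorm _
      rw [(hstepσ y).2] at h1
      rw [← h1, Complex.ofReal_re]
    have hnormint_integrable :
        Integrable (fun y : Fin M → ℝ => ∫ t : ℝ, ‖G (t, y)‖) := by
      have hIH := (ih (fun j => σ (Fin.succAbove 0 j)) (fun j => hreσ _) (τ - σ 0)
        (by rw [sub_re]; have := hreσ 0; linarith)).1
      exact ((hIH.const_mul c0σ).re).congr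
        (Filter.Eventually.of_forall fun y => (hnormint y).symm)
    have hGint : Integrable G ((volume : Measure ℝ).prod volume) := by
      refine (integrable_prod_iff' hGmeas).mpr ⟨?_, hnormint_integrable⟩
      refine Filter.Eventually.of_forall fun y => ?_
      have := (hstep y).1
      exact this.congr (Filter.Eventually.of_forall fun t => (hGpair t y).symm)
    have hcomp : putF K u s = G ∘ e := by
      funext x
      simp [hGdef, Function.comp]
    have hFint : Integrable (putF K u s) := by
      rw [hcomp]
      exact (hpres.integrable_comp_emb e.measurableEmbedding).mpr hGint
    refine ⟨hFint, ?_⟩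
    -- value computation
    have hIH := ih u' hre' (s - u 0) hs'
    have hval : ∫ x : Fin (M + 1) → ℝ, putF K u s x = c0 * ∫ y : Fin M → ℝ, putF K u' (s - u 0) y := by
      calc ∫ x, putF K u s x = ∫ p, G p ∂((volume : Measure ℝ).prod volume) := by
            rw [hcomp]
            exact hpres.integral_comp e.measurableEmbedding G
        _ = ∫ y : Fin M → ℝ, ∫ t : ℝ, G (t, y) := integral_prod_symm G hGint
        _ = ∫ y : Fin M → ℝ, c0 * putF K u' (s - u 0) y := by
            refine integral_congr_ae (Filter.Eventually.of_forall fun y => ?_)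
            dsimp only
            rw [integral_congr_ae (Filter.Eventually.of_forall fun t => hGpair t y),
              (hstep y).2]
        _ = c0 * ∫ y : Fin M → ℝ, putF K u' (s - u 0) y := integral_const_mul _ _
    rw [hval, hIH.2]
    -- final algebra
    have hsum : (∑ m : Fin (M + 1), u m) = u 0 + ∑ j, u' j := Fin.sum_univ_succAbove u 0
    have hprod : (∏ m : Fin (M + 1), Complex.Gamma (-u m))
        = Complex.Gamma (-u 0) * ∏ j, Complex.Gamma (-u' j) :=
      Fin.prod_univ_succAbove (fun m => Complex.Gamma (-u m)) 0
    have e1 : s - u 0 - ∑ j, u' j = s - ∑ m : Fin (M + 1), u m := by rw [hsum]; ring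
    have e2 : s - u 0 + 1 = s + 1 - u 0 := by ring
    have e3 : s - u 0 + 1 - ∑ j, u' j = s + 1 - ∑ m : Fin (M + 1), u m := by rw [hsum]; ring
    have hGne : Complex.Gamma (s + 1 - u 0) ≠ 0 := by
      refine Complex.Gamma_ne_zero_of_re_pos ?_
      rw [sub_re, add_re, one_re]
      have := hre 0
      linarith
    rw [e1, e3, e2, hprod, hc0]
    rw [div_mul_div_comm]
    rw [show Complex.Gamma (-u 0) * Complex.Gamma (s + 1)
          * ((K : ℂ) ^ (s - ∑ m : Fin (M + 1), u m) * Complex.Gamma (s + 1 - u 0)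
            * ∏ j, Complex.Gamma (-u' j))
        = ((K : ℂ) ^ (s - ∑ m : Fin (M + 1), u m) * Complex.Gamma (s + 1)
            * (Complex.Gamma (-u 0) * ∏ j, Complex.Gamma (-u' j)))
          * Complex.Gamma (s + 1 - u 0) from by ring]
    rw [mul_comm (Complex.Gamma (s + 1 - u 0))
      (Complex.Gamma (s + 1 - ∑ m : Fin (M + 1), u m))]
    rw [mul_div_mul_right _ _ hGne]


/-- **Bilateral Laplace transform of the put-on-the-sum payoff.** For `K > 0` and
`u ∈ ℂ^M` with `Re(u_m) < 0` for all `m`, the transform converges absolutely and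
`∫_{ℝ^M} e^{−Σ u_m x_m} (K − Σ_m e^{x_m})⁺ dx = K^{1−Σu} ∏ Γ(−u_m) / Γ(2 − Σu)`. -/
theorem laplace_transform_put_on_sum (M : ℕ) (hM : 1 ≤ M)
    (K : ℝ) (hK : 0 < K) (u : Fin M → ℂ)
    (hre : ∀ m, (u m).re < 0) :
    Integrable (fun x : Fin M → ℝ =>
      Complex.exp (-∑ m, u m * x m) * (max (K - ∑ m, Real.exp (x m)) 0 : ℝ)) ∧
    ∫ x : Fin M → ℝ,
        Complex.exp (-∑ m, u m * x m) * (max (K - ∑ m, Real.exp (x m)) 0 : ℝ)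
      = (K : ℂ) ^ (1 - ∑ m, u m) * (∏ m, Complex.Gamma (-u m))
          / Complex.Gamma (2 - ∑ m, u m) := by
  have h := putF_rec K hK M u hre 1 (by norm_num)
  have hfun : (fun x : Fin M → ℝ =>
      Complex.exp (-∑ m, u m * x m) * (max (K - ∑ m, Real.exp (x m)) 0 : ℝ)) = putF K u 1 := by
    funext x
    unfold putF
    rw [Complex.cpow_one]
  rw [hfun]
  refine ⟨h.1, ?_⟩
  have hg2 : Complex.Gamma 2 = 1 := by
    rw [show (2 : ℂ) = 1 + 1 by norm_num, Complex.Gamma_add_one _ one_ne_zero,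
      Complex.Gamma_one, mul_one]
  rw [h.2, show (1 : ℂ) + 1 = 2 by norm_num, hg2, mul_one]
end
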